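/- arXiv:1507.04263 — 5 statements merged into one kernel-verified Lean document; each statement's English description precedes it below -/
import Mathlib

section
/- (Row-permutation step via Hall's matching theorem.) Let m, r ≥ 1 and let M : Fin m × Fin r → Fin m be a 'destination row' assignment such that every value in Fin m is attained by M exactly r times (counting over all m·r positions). Then there exist permutations ρ_w of Fin r, one for each row w ∈ Fin m, such that for every column index i ∈ Fin r the map w ↦ M(w, ρ_w(i)) is a bijection of Fin m; i.e., after permuting the entries within each row, every column contains each destination row label exactly once. -/
open Finset

lemma count_row_perm {m r : ℕ} (M : Fin m × Fin r → Fin m)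
    (τ : Fin m → Equiv.Perm (Fin r)) (y : Fin m) :
    (univ.filter (fun p : Fin m × Fin r => M (p.1, τ p.1 p.2) = y)).card
      = (univ.filter (fun p : Fin m × Fin r => M p = y)).card := by
  apply Finset.card_equiv
    (⟨fun p => (p.1, τ p.1 p.2), fun p => (p.1, (τ p.1)⁻¹ p.2),
      fun p => by simp, fun p => by simp⟩ : (Fin m × Fin r) ≃ (Fin m × Fin r))
  intro p
  simp

lemma hall_aux (m : ℕ) : ∀ r (M : Fin m × Fin r → Fin m),
    (∀ y : Fin m, (univ.filter (fun p : Fin m × Fin r => M p = y)).card = r) →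
    ∃ ρ : Fin m → Equiv.Perm (Fin r),
      ∀ i : Fin r, Function.Bijective (fun w : Fin m => M (w, ρ w i)) := by
  intro r
  induction r with
  | zero => exact fun M _ => ⟨fun _ => 1, fun i => i.elim0⟩
  | succ r ih =>
    intro M hM
    -- Hall's condition
    set t : Fin m → Finset (Fin m) := fun w => univ.image (fun i => M (w, i)) with ht
    have hall : ∀ A : Finset (Fin m), A.card ≤ (A.biUnion t).card := by
      intro A
      have h1 : (univ.filter (fun p : Fin m × Fin (r+1) => p.1 ∈ A)).card
          = A.card * (r+1) := by
        have : (univ.filter (fun p : Fin m × Fin (r+1) => p.1 ∈ A)) = A ×ˢ univ := by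
          ext p; simp [Finset.mem_product]
        rw [this, Finset.card_product, Finset.card_univ, Fintype.card_fin]
      have h2 : (univ.filter (fun p : Fin m × Fin (r+1) => p.1 ∈ A)).card
          = ∑ y ∈ A.biUnion t,
              ((univ.filter (fun p : Fin m × Fin (r+1) => p.1 ∈ A)).filter
                (fun p => M p = y)).card := by
        apply Finset.card_eq_sum_card_fiberwise
        intro p hp
        simp only [Finset.mem_coe, mem_filter, mem_univ, true_and] at hp
        exact Finset.mem_biUnion.mpr ⟨p.1, hp,
          Finset.mem_image.mpr ⟨p.2, mem_univ _, rfl⟩⟩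
      have h3 : ∀ y : Fin m,
          ((univ.filter (fun p : Fin m × Fin (r+1) => p.1 ∈ A)).filter
            (fun p => M p = y)).card ≤ r + 1 := by
        intro y
        refine le_trans (Finset.card_le_card ?_) (le_of_eq (hM y))
        intro p hp
        simp only [mem_filter, mem_univ, true_and] at hp ⊢
        exact hp.2
      have h4 : A.card * (r+1) ≤ (A.biUnion t).card * (r+1) := by
        rw [← h1, h2]
        calc ∑ y ∈ A.biUnion t, _ ≤ ∑ _y ∈ A.biUnion t, (r+1) :=
              Finset.sum_le_sum (fun y _ => h3 y)
          _ = (A.biUnion t).card * (r+1) := by rw [Finset.sum_const, smul_eq_mul]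
      exact Nat.le_of_mul_le_mul_right h4 (Nat.succ_pos r)
    obtain ⟨f, hfinj, hft⟩ :=
      (Finset.all_card_le_biUnion_card_iff_exists_injective t).mp hall
    have hfb : Function.Bijective f := (Finite.injective_iff_bijective).mp hfinj
    have hidx : ∀ w, ∃ i, M (w, i) = f w := by
      intro w
      obtain ⟨i, -, hi⟩ := Finset.mem_image.mp (hft w)
      exact ⟨i, hi⟩
    choose idx hidx using hidx
    set τ : Fin m → Equiv.Perm (Fin (r+1)) := fun w => Equiv.swap 0 (idx w) with hτ
    set M' : Fin m × Fin (r+1) → Fin m := fun p => M (p.1, τ p.1 p.2) with hM'def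
    have hM'0 : ∀ w, M' (w, 0) = f w := by
      intro w
      simp only [hM'def, hτ, Equiv.swap_apply_left]
      exact hidx w
    have hM' : ∀ y : Fin m,
        (univ.filter (fun p : Fin m × Fin (r+1) => M' p = y)).card = r + 1 := by
      intro y
      rw [hM'def]
      rw [count_row_perm M τ y]
      exact hM y
    set N : Fin m × Fin r → Fin m := fun p => M' (p.1, p.2.succ) with hNdef
    set e : Fin m ≃ Fin m := Equiv.ofBijective f hfb with he
    have hN : ∀ y : Fin m,
        (univ.filter (fun p : Fin m × Fin r => N p = y)).card = r := by
      intro y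
      have hsplit := Finset.card_filter_add_card_filter_not
        (s := univ.filter (fun p : Fin m × Fin (r+1) => M' p = y))
        (p := fun p : Fin m × Fin (r+1) => p.2 = 0)
      have hcard1 : ((univ.filter (fun p : Fin m × Fin (r+1) => M' p = y)).filter
          (fun p => p.2 = 0)).card = 1 := by
        rw [Finset.card_eq_one]
        refine ⟨(e.symm y, 0), ?_⟩
        ext ⟨w, i⟩
        simp only [mem_filter, mem_univ, true_and, Finset.mem_singleton, Prod.mk.injEq]
        constructor
        · rintro ⟨h1, h2⟩
          subst h2
          rw [hM'0 w] at h1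
          exact ⟨(Equiv.eq_symm_apply e).mpr h1, rfl⟩
        · rintro ⟨h1, h2⟩
          subst h1; subst h2
          rw [hM'0]
          exact ⟨e.apply_symm_apply y, rfl⟩
      have hcard2 : (univ.filter (fun p : Fin m × Fin r => N p = y)).card
          = ((univ.filter (fun p : Fin m × Fin (r+1) => M' p = y)).filter
              (fun p => ¬ p.2 = 0)).card := by
        apply Finset.card_bij (fun p _ => (p.1, p.2.succ))
        · intro p hp
          simp only [mem_filter, mem_univ, true_and, hNdef] at hp ⊢
          exact ⟨hp, Fin.succ_ne_zero _⟩
        · intro p hp q hq h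
          rw [Prod.mk.injEq] at h
          exact Prod.ext h.1 (Fin.succ_inj.mp h.2)
        · intro p hp
          simp only [mem_filter, mem_univ, true_and] at hp
          refine ⟨(p.1, p.2.pred hp.2), ?_, ?_⟩
          · simp only [mem_filter, mem_univ, true_and, hNdef, Fin.succ_pred]
            rw [Prod.mk.eta]
            exact hp.1
          · rw [Fin.succ_pred, Prod.mk.eta]
      have := hM' y
      omega
    obtain ⟨ρ', hρ'⟩ := ih N hN
    refine ⟨fun w => τ w * Equiv.Perm.decomposeFin.symm (0, ρ' w), ?_⟩
    intro i
    induction i using Fin.cases with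
    | zero =>
      have : (fun w : Fin m => M (w, (τ w * Equiv.Perm.decomposeFin.symm (0, ρ' w)) 0))
          = f := by
        funext w
        rw [Equiv.Perm.mul_apply, Equiv.Perm.decomposeFin_symm_apply_zero]
        exact hM'0 w
      rw [this]
      exact hfb
    | succ j =>
      have : (fun w : Fin m =>
            M (w, (τ w * Equiv.Perm.decomposeFin.symm (0, ρ' w)) j.succ))
          = (fun w : Fin m => N (w, ρ' w j)) := by
        funext w
        rw [Equiv.Perm.mul_apply, Equiv.Perm.decomposeFin_symm_apply_succ,
          Equiv.swap_self]
        rfl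
      rw [this]
      exact hρ' j

/-- **Row-permutation step via Hall's matching theorem.** Let `M : Fin m × Fin r → Fin m` be a
destination-row assignment attaining every value exactly `r` times. Then the entries within
each row can be permuted (by permutations `ρ w` of the column indices) so that afterwards every
column contains each destination row label exactly once, i.e. for every column `i` the map
`w ↦ M (w, ρ w i)` is a bijection of `Fin m`. -/
theorem row_permutation_hall (m r : ℕ) (hm : 1 ≤ m) (hr : 1 ≤ r)
    (M : Fin m × Fin r → Fin m)
    (hM : ∀ y : Fin m,
      (Finset.univ.filter (fun p : Fin m × Fin r => M p = y)).card = r) :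
    ∃ ρ : Fin m → Equiv.Perm (Fin r),
      ∀ i : Fin r, Function.Bijective (fun w : Fin m => M (w, ρ w i)) := by
  exact hall_aux m r M hM
end

section
/- (Parallel insertion/odd-even sort on the path.) For every m ≥ 2, every permutation π of Fin m can be written as a composition π = σ_T ∘ ⋯ ∘ σ_1 of T ≤ 2m − 3 permutations, where each factor σ_t is a product of pairwise disjoint adjacent transpositions, i.e. for every x, σ_t(x) ∈ {x − 1, x, x + 1}. Thus on the 1D nearest-neighbour graph of m nodes, any permutation of the qubits can be implemented by parallel nearest-neighbour SWAP gates in depth 2m − 3. -/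
namespace PathSort

open Equiv List

/-- adjacent swap `(i, i+1)` in `Fin M`; identity if out of range. -/
def swp (M i : ℕ) : Equiv.Perm (Fin M) :=
  if h : i + 1 < M then Equiv.swap ⟨i, by omega⟩ ⟨i + 1, h⟩ else 1

lemma swp_mul_self (M i : ℕ) : swp M i * swp M i = 1 := by
  unfold swp; split
  · exact Equiv.swap_mul_self _ _
  · simp

lemma swp_adj (M i : ℕ) (x : Fin M) :
    ((swp M i x : ℕ) = x ∨ (swp M i x : ℕ) + 1 = x ∨ (swp M i x : ℕ) = (x : ℕ) + 1) := by
  unfold swp; split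
  · rename_i h
    rcases eq_or_ne x ⟨i, by omega⟩ with rfl | h1
    · rw [Equiv.swap_apply_left]; simp
    rcases eq_or_ne x ⟨i + 1, h⟩ with rfl | h2
    · rw [Equiv.swap_apply_right]; simp
    · rw [Equiv.swap_apply_of_ne_of_ne h1 h2]; omega
  · simp

lemma swp_fix {M i : ℕ} {x : Fin M} (h1 : (x : ℕ) ≠ i) (h2 : (x : ℕ) ≠ i + 1) :
    swp M i x = x := by
  unfold swp; split
  · apply Equiv.swap_apply_of_ne_of_ne <;> (intro hc; subst hc; simp_all)
  · simp

lemma swp_apply_right {M i : ℕ} (h : i + 1 < M) :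
    swp M i ⟨i + 1, h⟩ = ⟨i, by omega⟩ := by
  unfold swp; rw [dif_pos h]; exact Equiv.swap_apply_right _ _


section ListLemmas

variable {G : Type*} [Monoid G]

lemma revprod_trail (f : ℕ → G) {N' : ℕ} (h1 : ∀ t, N' ≤ t → f t = 1) :
    ∀ {N : ℕ}, N' ≤ N →
      ((List.range N).map f).reverse.prod = ((List.range N').map f).reverse.prod := by
  intro N
  induction N with
  | zero => intro h; interval_cases N' ; rfl
  | succ n ih =>
    intro h
    rcases Nat.lt_or_ge N' (n+1) with h' | h'
    · have hn : N' ≤ n := by omega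
      rw [List.range_succ]
      simp only [List.map_append, List.reverse_append, List.prod_append]
      simp only [List.map_cons, List.map_nil, List.reverse_cons, List.reverse_nil,
        List.nil_append, List.prod_cons, List.prod_nil, mul_one, h1 n hn, one_mul]
      exact ih hn
    · have : N' = n + 1 := by omega
      subst this; rfl

lemma revprod_split (b c : ℕ → G) (hcomm : ∀ s t, s < t → Commute (c t) (b s)) :
    ∀ N : ℕ,
      ((List.range N).map (fun t => b t * c t)).reverse.prod =
        ((List.range N).map b).reverse.prod * ((List.range N).map c).reverse.prod := by
  intro N
  induction N with
  | zero => simp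
  | succ n ih =>
    rw [List.range_succ]
    simp only [List.map_append, List.reverse_append, List.prod_append]
    rw [ih]
    simp only [List.map_cons, List.map_nil, List.reverse_cons, List.reverse_nil,
      List.nil_append, List.prod_cons, List.prod_nil, mul_one]
    have hB : Commute (c n) (((List.range n).map b).reverse.prod) := by
      apply Commute.list_prod_right
      intro x hx
      simp only [List.mem_reverse, List.mem_map, List.mem_range] at hx
      obtain ⟨s, hs, rfl⟩ := hx
      exact hcomm s n hs
    calc b n * c n * (((List.range n).map b).reverse.prod * ((List.range n).map c).reverse.prod)
        = b n * (c n * ((List.range n).map b).reverse.prod) * ((List.range n).map c).reverse.prod := by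
          simp [mul_assoc]
      _ = b n * (((List.range n).map b).reverse.prod * c n) * ((List.range n).map c).reverse.prod := by
          rw [hB.eq]
      _ = b n * ((List.range n).map b).reverse.prod * (c n * ((List.range n).map c).reverse.prod) := by
          simp [mul_assoc]

lemma revprod_shift (g : ℕ → G) (C N : ℕ) (h : C < N) :
    ((List.range N).map (fun t => if t ≤ C then g (C - t) else 1)).reverse.prod =
      ((List.range (C + 1)).map g).prod := by
  rw [revprod_trail (fun t => if t ≤ C then g (C - t) else 1)
    (by intro t ht; simp only [if_neg (by omega : ¬ t ≤ C)]) (by omega : C + 1 ≤ N)]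
  congr 1
  apply List.ext_getElem
  · simp
  · intro i h1 h2
    simp only [List.getElem_reverse, List.getElem_map, List.getElem_range, List.length_reverse,
      List.length_map, List.length_range] at h1 h2 ⊢
    rw [if_pos (by omega)]
    congr 1
    omega

lemma window_prod (g : ℕ → G) (a k n : ℕ) (h : a + k ≤ n)
    (h1 : ∀ i, i < a → g i = 1) (h2 : ∀ i, a + k ≤ i → g i = 1) :
    ((List.range n).map g).prod = ((List.range' a k).map g).prod := by
  rw [List.range_eq_range']
  have eB : List.range' a k ++ List.range' (a + k) (n - a - k) = List.range' a (n - a) := by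
    rw [List.range'_append_1]
    congr 1
    omega
  have eA : List.range' 0 a ++ List.range' a (n - a) = List.range' 0 n := by
    have h0 := List.range'_append_1 (s := 0) (m := a) (n := n - a)
    rw [Nat.zero_add] at h0
    rw [h0]
    congr 1
    omega
  have e1 : List.range' 0 n = List.range' 0 a ++ (List.range' a k ++ List.range' (a + k) (n - a - k)) := by
    rw [eB, eA]
  rw [e1]
  simp only [List.map_append, List.prod_append]
  have p1 : ((List.range' 0 a).map g).prod = 1 := by
    apply List.prod_eq_one
    intro x hx
    simp only [List.mem_map, List.mem_range'_1] at hx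
    obtain ⟨y, hy, rfl⟩ := hx
    exact h1 y (by omega)
  have p2 : ((List.range' (a + k) (n - a - k)).map g).prod = 1 := by
    apply List.prod_eq_one
    intro x hx
    simp only [List.mem_map, List.mem_range'_1] at hx
    obtain ⟨y, hy, rfl⟩ := hx
    exact h2 y (by omega)
  rw [p1, p2, one_mul, mul_one]

end ListLemmas

lemma staircase_apply (M : ℕ) :
    ∀ (k a : ℕ) (h : a + k + 1 ≤ M),
      (((List.range' a k).map (swp M)).prod) ⟨a + k, by omega⟩ = ⟨a, by omega⟩ := by
  intro k
  induction k with
  | zero => intro a h; simp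
  | succ k ih =>
    intro a h
    rw [List.range'_succ]
    simp only [List.map_cons, List.prod_cons]
    rw [Equiv.Perm.mul_apply]
    have e1 : (⟨a + (k + 1), by omega⟩ : Fin M) = ⟨(a + 1) + k, by omega⟩ := by
      apply Fin.ext; simp; omega
    rw [e1, ih (a + 1) (by omega)]
    have e2 : (⟨a + 1, by omega⟩ : Fin M) = ⟨a + 1, by omega⟩ := rfl
    rw [swp_apply_right (by omega : a + 1 < M)]

section Emb

variable {m : ℕ}

/-- `Fin m` as the subtype of `Fin (m+1)` of elements `< m`. -/
def eFin (m : ℕ) : Fin m ≃ {x : Fin (m + 1) // (x : ℕ) < m} where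
  toFun a := ⟨⟨a.1, by omega⟩, a.2⟩
  invFun x := ⟨(x.1 : ℕ), x.2⟩
  left_inv a := rfl
  right_inv x := rfl

/-- extend a permutation of `Fin m` to `Fin (m+1)` fixing the last element. -/
def emb (m : ℕ) : Equiv.Perm (Fin m) →* Equiv.Perm (Fin (m + 1)) :=
  Equiv.Perm.extendDomainHom (eFin m)

lemma emb_apply_lt (ρ : Equiv.Perm (Fin m)) {x : Fin (m + 1)} (h : (x : ℕ) < m) :
    emb m ρ x = ⟨(ρ ⟨(x : ℕ), h⟩ : ℕ), by omega⟩ := by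
  have := Equiv.Perm.extendDomain_apply_subtype ρ (eFin m) h
  simp only [emb, Equiv.Perm.extendDomainHom_apply]
  rw [this]
  rfl

lemma emb_apply_ge (ρ : Equiv.Perm (Fin m)) {x : Fin (m + 1)} (h : ¬ (x : ℕ) < m) :
    emb m ρ x = x :=
  Equiv.Perm.extendDomain_apply_not_subtype ρ (eFin m) h

lemma emb_support (ρ : Equiv.Perm (Fin m)) {x : Fin (m + 1)} (h : emb m ρ x ≠ x) :
    (x : ℕ) < m ∧ ∀ (hx : (x : ℕ) < m), (emb m ρ x : ℕ) = (ρ ⟨(x : ℕ), hx⟩ : ℕ) := by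
  by_cases hx : (x : ℕ) < m
  · exact ⟨hx, fun hx' => by rw [emb_apply_lt ρ hx']⟩
  · exact absurd (emb_apply_ge ρ hx) h

end Emb

lemma aux : ∀ (m : ℕ) (π : Equiv.Perm (Fin m)),
    ∃ σ : ℕ → Equiv.Perm (Fin m),
      (∀ t x, σ t (σ t x) = x) ∧
      (∀ (t : ℕ) (x : Fin m), (σ t x : ℕ) = x ∨ (σ t x : ℕ) + 1 = x ∨ (σ t x : ℕ) = (x : ℕ) + 1) ∧
      (∀ (t : ℕ) (x : Fin m), 2 * m ≤ (x : ℕ) + t + 2 → σ t x = x) ∧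
      (∀ t : ℕ, 2 * m ≤ t + 3 → σ t = 1) ∧
      π = ((List.range (2 * m - 3)).map σ).reverse.prod := by
  intro m
  induction m with
  | zero =>
    intro π
    refine ⟨fun _ => 1, by simp, by simp, by simp, by simp, ?_⟩
    have : π = 1 := Equiv.ext fun x => x.elim0
    rw [this]; simp
  | succ n ih =>
    intro π
    rcases Nat.eq_zero_or_pos n with rfl | hn
    · refine ⟨fun _ => 1, by simp, by simp, by simp, by simp, ?_⟩
      have : π = 1 := Equiv.ext fun x => Fin.ext (by have h1 := (π x).2; have h2 := x.2; omega)
      rw [this]; simp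
    -- main step: `n ≥ 1`, size `n + 1`
    set j : ℕ := (π (Fin.last n) : ℕ) with hjdef
    have hj : j ≤ n := by have := (π (Fin.last n)).2; omega
    set B : Equiv.Perm (Fin (n + 1)) := ((List.range' j (n - j)).map (swp (n + 1))).prod with hBdef
    have hBlast : B (Fin.last n) = π (Fin.last n) := by
      have h0 := staircase_apply (n + 1) (n - j) j (by omega)
      have e1 : (⟨j + (n - j), by omega⟩ : Fin (n + 1)) = Fin.last n := by
        apply Fin.ext
        show j + (n - j) = n
        omega
      rw [e1] at h0
      have e2 : B (Fin.last n) = (⟨j, by omega⟩ : Fin (n + 1)) := by rw [hBdef]; exact h0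
      rw [e2]
    set ρ : Equiv.Perm (Fin (n + 1)) := B⁻¹ * π with hρdef
    have hρlast : ρ (Fin.last n) = Fin.last n := by
      rw [hρdef, Equiv.Perm.mul_apply, ← hBlast, Equiv.Perm.inv_def, Equiv.symm_apply_apply]
    have hρfix : ∀ x : Fin (n + 1), ¬ (x : ℕ) < n → ρ x = x := by
      intro x hx
      have hxl : x = Fin.last n := by apply Fin.ext; have := x.2; simp [Fin.last]; omega
      rw [hxl, hρlast]
    have hp : ∀ x : Fin (n + 1), ((x : ℕ) < n) ↔ ((ρ x : ℕ) < n) := by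
      intro x
      constructor
      · intro h
        by_contra hc
        have hxl : ρ x = Fin.last n := by apply Fin.ext; have := (ρ x).2; simp [Fin.last]; omega
        have hxx : x = Fin.last n := ρ.injective (hxl.trans hρlast.symm)
        rw [hxx] at h
        simp [Fin.last] at h
      · intro h
        by_contra hc
        rw [hρfix x hc] at h
        exact hc h
    set π' : Equiv.Perm (Fin n) := (Equiv.permCongr (eFin n).symm) (ρ.subtypePerm (fun x => (hp x).symm)) with hπ'def
    have hemb : emb n π' = ρ := by
      apply Equiv.ext
      intro x
      by_cases hx : (x : ℕ) < n
      · rw [emb_apply_lt _ hx]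
        apply Fin.ext
        simp [hπ'def, Equiv.Perm.subtypePerm_apply, eFin]
      · rw [emb_apply_ge _ hx, hρfix x hx]
    obtain ⟨σ', h1', h2', h3', h4', h5'⟩ := ih π'
    set g : ℕ → Equiv.Perm (Fin (n + 1)) :=
      fun i => if j ≤ i ∧ i + 1 ≤ n then swp (n + 1) i else 1 with hgdef
    set b : ℕ → Equiv.Perm (Fin (n + 1)) :=
      fun t => if t ≤ 2 * n - 2 then g (2 * n - 2 - t) else 1 with hbdef
    set c : ℕ → Equiv.Perm (Fin (n + 1)) := fun t => emb n (σ' t) with hcdef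
    have hbcases : ∀ t : ℕ, b t = 1 ∨
        (t ≤ 2 * n - 2 ∧ j + t ≤ 2 * n - 2 ∧ n ≤ t + 1 ∧ b t = swp (n + 1) (2 * n - 2 - t)) := by
      intro t
      simp only [hbdef, hgdef]
      by_cases h1 : t ≤ 2 * n - 2
      · rw [if_pos h1]
        by_cases h2 : j ≤ 2 * n - 2 - t ∧ 2 * n - 2 - t + 1 ≤ n
        · rw [if_pos h2]
          exact Or.inr ⟨h1, by omega, by omega, rfl⟩
        · rw [if_neg h2]; exact Or.inl rfl
      · rw [if_neg h1]; exact Or.inl rfl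
    have hbsupp : ∀ (s : ℕ) (x : Fin (n + 1)), b s x ≠ x →
        2 * n ≤ (x : ℕ) + s + 2 ∧ (x : ℕ) + s + 1 ≤ 2 * n := by
      intro s x hx
      rcases hbcases s with h | ⟨hs1, hs2, hs3, hs4⟩
      · rw [h] at hx; simp at hx
      · rw [hs4] at hx
        by_cases hxi : (x : ℕ) = 2 * n - 2 - s
        · omega
        by_cases hxi1 : (x : ℕ) = 2 * n - 2 - s + 1
        · omega
        · exact absurd (swp_fix hxi hxi1) hx
    have hcsupp : ∀ (t : ℕ) (x : Fin (n + 1)), c t x ≠ x → (x : ℕ) + t + 3 ≤ 2 * n := by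
      intro t x hx
      simp only [hcdef] at hx
      obtain ⟨hlt, -⟩ := emb_support (σ' t) hx
      by_contra hcon
      have hfix : σ' t ⟨(x : ℕ), hlt⟩ = ⟨(x : ℕ), hlt⟩ := h3' t _ (by simp; omega)
      apply hx
      rw [emb_apply_lt _ hlt]; apply Fin.ext
      show ((σ' t ⟨(x : ℕ), hlt⟩ : Fin n) : ℕ) = x; rw [hfix]
    have hdisj : ∀ s t : ℕ, s ≤ t → ∀ x, c t x = x ∨ b s x = x := by
      intro s t hst x
      by_cases hcx : c t x = x
      · exact Or.inl hcx
      · refine Or.inr ?_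
        have h1 := hcsupp t x hcx
        by_contra hbx
        have h2 := hbsupp s x hbx
        omega
    have hcomm : ∀ s t : ℕ, s < t → Commute (c t) (b s) :=
      fun s t hst => Equiv.Perm.Disjoint.commute (fun x => hdisj s t (le_of_lt hst) x)
    have hcomm_tt : ∀ t : ℕ, Commute (c t) (b t) :=
      fun t => Equiv.Perm.Disjoint.commute (fun x => hdisj t t le_rfl x)
    have hb2 : ∀ t, b t * b t = 1 := by
      intro t
      rcases hbcases t with h | ⟨-, -, -, h⟩ <;> rw [h]
      · simp
      · exact swp_mul_self _ _
    have hc2 : ∀ t, c t * c t = 1 := by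
      intro t
      simp only [hcdef, ← map_mul]
      have : σ' t * σ' t = 1 := Equiv.ext fun y => h1' t y
      rw [this, map_one]
    refine ⟨fun t => b t * c t, ?_, ?_, ?_, ?_, ?_⟩
    · -- involution
      intro t x
      have hsq : (b t * c t) * (b t * c t) = 1 := by
        calc (b t * c t) * (b t * c t) = b t * (c t * b t) * c t := by
              simp [mul_assoc]
          _ = b t * (b t * c t) * c t := by rw [(hcomm_tt t).eq]
          _ = (b t * b t) * (c t * c t) := by simp [mul_assoc]
          _ = 1 := by rw [hb2, hc2, one_mul]
      have := Equiv.Perm.ext_iff.mp hsq x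
      simpa [Equiv.Perm.mul_apply] using this
    · -- adjacency
      intro t x
      by_cases hcx : c t x = x
      · have e : (b t * c t) x = b t x := by rw [Equiv.Perm.mul_apply, hcx]
        rw [e]
        rcases hbcases t with h | ⟨-, -, -, h⟩ <;> rw [h]
        · simp
        · exact swp_adj _ _ x
      · have h1 := hcsupp t x hcx
        have hccx : c t (c t x) = x := by
          have := Equiv.Perm.ext_iff.mp (hc2 t) x
          simpa [Equiv.Perm.mul_apply] using this
        have hcx2 : c t (c t x) ≠ c t x := by rw [hccx]; exact fun h => hcx h.symm
        have h2 := hcsupp t (c t x) hcx2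
        have hbfix : b t (c t x) = c t x := by
          by_contra hb
          have := hbsupp t (c t x) hb
          omega
        have e : (b t * c t) x = c t x := by rw [Equiv.Perm.mul_apply, hbfix]
        rw [e]
        simp only [hcdef] at hcx ⊢
        obtain ⟨hlt, -⟩ := emb_support (σ' t) hcx
        rw [emb_apply_lt _ hlt]
        have := h2' t ⟨(x : ℕ), hlt⟩
        simpa using this
    · -- support bound
      intro t x hx
      have hb : b t x = x := by
        by_contra hcon; have := hbsupp t x hcon; omega
      have hc : c t x = x := by
        by_contra hcon; have := hcsupp t x hcon; omega
      rw [Equiv.Perm.mul_apply, hc, hb]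
    · -- trailing identities
      intro t ht
      have hb : b t = 1 := by
        rcases hbcases t with h | ⟨h1, -, -, -⟩
        · exact h
        · omega
      have hc : c t = 1 := by
        simp only [hcdef]
        rw [h4' t (by omega), map_one]
      show b t * c t = 1
      rw [hb, hc, one_mul]
    · -- the product
      have hT : 2 * (n + 1) - 3 = 2 * n - 1 := by omega
      rw [hT, revprod_split b c hcomm (2 * n - 1)]
      have hbprod : ((List.range (2 * n - 1)).map b).reverse.prod = B := by
        rw [hbdef]
        rw [revprod_shift g (2 * n - 2) (2 * n - 1) (by omega)]
        have e2 : 2 * n - 2 + 1 = 2 * n - 1 := by omega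
        rw [e2]
        rw [window_prod g j (n - j) (2 * n - 1) (by omega)
          (fun i hi => by simp only [hgdef]; exact if_neg (by omega))
          (fun i hi => by simp only [hgdef]; exact if_neg (by omega))]
        rw [hBdef]
        congr 1
        apply List.map_congr_left
        intro i hi
        rw [List.mem_range'_1] at hi
        simp only [hgdef]
        exact if_pos ⟨by omega, by omega⟩
      have hcprod : ((List.range (2 * n - 1)).map c).reverse.prod = emb n π' := by
        simp only [hcdef]
        have e1 : (List.range (2 * n - 1)).map (fun t => emb n (σ' t)) =
            ((List.range (2 * n - 1)).map σ').map (emb n) := by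
          rw [List.map_map]; rfl
        rw [e1, ← List.map_reverse, ← map_list_prod (emb n)]
        congr 1
        rw [revprod_trail σ' (fun t ht => h4' t (by omega)) (by omega : 2 * n - 3 ≤ 2 * n - 1)]
        exact h5'.symm
      rw [hbprod, hcprod, hemb, hρdef, mul_inv_cancel_left]

end PathSort


/-- **Parallel insertion/odd–even sort on the path.** For `m ≥ 2`, every permutation `π` of
`Fin m` is a composition `σ_T ∘ ⋯ ∘ σ_1` of `T ≤ 2m - 3` permutations, each of which is a
product of pairwise disjoint adjacent transpositions: each `σ t` is an involution moving every
point by at most one position on the path (no wrap-around). -/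
theorem path_parallel_sorting (m : ℕ) (hm : 2 ≤ m) (π : Equiv.Perm (Fin m)) :
    ∃ T : ℕ, T ≤ 2 * m - 3 ∧
      ∃ σ : Fin T → Equiv.Perm (Fin m),
        (∀ t, (∀ x, σ t (σ t x) = x) ∧
          ∀ x : Fin m, ((σ t x : ℕ) = (x : ℕ) ∨ (σ t x : ℕ) + 1 = (x : ℕ) ∨
            (σ t x : ℕ) = (x : ℕ) + 1)) ∧
        π = (List.ofFn σ).reverse.prod := by
  obtain ⟨σa, h1, h2, h3, h4, h5⟩ := PathSort.aux m π
  refine ⟨2 * m - 3, le_rfl, fun t => σa t.val,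
    fun t => ⟨h1 t.val, h2 t.val⟩, ?_⟩
  rw [h5]
  congr 1
  congr 1
  rw [List.ofFn_eq_map]
  apply List.ext_getElem <;> simp
end

section
/- (Bitonic sort on the hypercube.) For every r ≥ 1, every permutation π of the set of r-bit words (Fin r → Bool) can be written as a composition π = σ_T ∘ ⋯ ∘ σ_1 of T ≤ r(r+1)/2 permutations, where for each factor σ_t there is a single dimension d_t ∈ Fin r such that for every word x, σ_t(x) ∈ {x, x ⊕ e_{d_t}}. Thus on the 2^r-node hypercube, any permutation of the qubits can be implemented by parallel SWAP gates along hypercube edges in depth (1/2)·log₂ n·(log₂ n + 1), where n = 2^r. -/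
/-- The `r`-bit word obtained from `x` by flipping bit `d` (i.e. `x ⊕ e_d`). -/
def flipBit (r : ℕ) (d : Fin r) (x : Fin r → Bool) : Fin r → Bool :=
  Function.update x d (!x d)

open Equiv Finset
set_option linter.unusedSectionVars false
set_option maxHeartbeats 1000000

namespace HBS

variable {A : Type*} [DecidableEq A] [Fintype A]

def tau (f : A → Bool) : Equiv.Perm (A × Bool) :=
  Function.Involutive.toPerm (fun q => (q.1, xor (f q.1) q.2))
    (by intro q; simp [Bool.xor_assoc])

@[simp] lemma tau_apply (f : A → Bool) (q : A × Bool) :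
    tau f q = (q.1, xor (f q.1) q.2) := rfl

lemma tau_mul_self (f : A → Bool) : tau f * tau f = 1 := by
  ext q <;> simp [Equiv.Perm.mul_apply, Bool.xor_assoc]

def MM : Equiv.Perm A × Equiv.Perm A →* Equiv.Perm (A × Bool) where
  toFun p :=
    { toFun := fun q => ((cond q.2 p.2 p.1) q.1, q.2)
      invFun := fun q => ((cond q.2 p.2 p.1).symm q.1, q.2)
      left_inv := by intro q; simp
      right_inv := by intro q; simp }
  map_one' := by ext q <;> cases q with | mk a b => cases b <;> simp
  map_mul' := by
    intro x y; ext q <;> cases q with | mk a b =>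
      cases b <;> simp [Equiv.Perm.mul_apply]

@[simp] lemma MM_apply (p : Equiv.Perm A × Equiv.Perm A) (q : A × Bool) :
    MM p q = ((cond q.2 p.2 p.1) q.1, q.2) := rfl

lemma exists_matching (π : Equiv.Perm (A × Bool)) :
    ∃ F : A → A, Function.Injective F ∧
      ∀ a, F a = (π (a, false)).1 ∨ F a = (π (a, true)).1 := by
  classical
  set t : A → Finset A := fun a => {(π (a, false)).1, (π (a, true)).1} with ht
  have hall : ∀ s : Finset A, s.card ≤ (s.biUnion t).card := by
    intro s
    set φ : A × Bool → A := fun q => (π q).1 with hφ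
    have h1 : (s ×ˢ (Finset.univ : Finset Bool)).card
        ≤ 2 * ((s ×ˢ (Finset.univ : Finset Bool)).image φ).card := by
      apply Finset.card_le_mul_card_image
      intro c _
      have : ({q ∈ s ×ˢ (Finset.univ : Finset Bool) | φ q = c}).card
          ≤ (Finset.univ : Finset Bool).card := by
        apply Finset.card_le_card_of_injOn (fun q => (π q).2)
        · intro q _; exact Finset.mem_univ _
        · intro q hq q' hq' h2
          simp only [Finset.coe_filter, Set.mem_setOf_eq] at hq hq'
          apply π.injective
          exact Prod.ext (hq.2.trans hq'.2.symm) h2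
      simp only [Finset.card_univ, Fintype.card_bool] at this
      exact this
    have h2 : (s ×ˢ (Finset.univ : Finset Bool)).image φ ⊆ s.biUnion t := by
      intro c hc
      simp only [Finset.mem_image, Finset.mem_product] at hc
      obtain ⟨⟨a, b⟩, ⟨ha, _⟩, rfl⟩ := hc
      refine Finset.mem_biUnion.2 ⟨a, ha, ?_⟩
      cases b <;> simp [ht, φ]
    have h3 : (s ×ˢ (Finset.univ : Finset Bool)).card = 2 * s.card := by
      simp [Finset.card_product, mul_comm]
    have := h1.trans (Nat.mul_le_mul_left 2 (Finset.card_le_card h2))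
    omega
  obtain ⟨F, hFinj, hF⟩ := (Finset.all_card_le_biUnion_card_iff_exists_injective t).1 hall
  refine ⟨F, hFinj, fun a => ?_⟩
  have := hF a
  simp only [ht, Finset.mem_insert, Finset.mem_singleton] at this
  exact this

/-- Beneš decomposition. -/
lemma benes' (π : Equiv.Perm (A × Bool)) :
    ∃ (f g : A → Bool) (p : Equiv.Perm A × Equiv.Perm A),
      π = tau g * MM p * tau f := by
  classical
  obtain ⟨F, hFinj, hF⟩ := exists_matching π
  have hFbij : Function.Bijective F := (Finite.injective_iff_bijective).1 hFinj
  set E : A ≃ A := Equiv.ofBijective F hFbij with hE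
  have hEF : ∀ a, E.symm (F a) = a := fun a => E.symm_apply_apply a
  have hFE : ∀ c, F (E.symm c) = c := fun c => E.apply_symm_apply c
  set b : A → Bool := fun a => if (π (a, false)).1 = F a then false else true with hbdef
  have hb : ∀ a, (π (a, b a)).1 = F a := by
    intro a
    by_cases h : (π (a, false)).1 = F a
    · simp [hbdef, h]
    · have : b a = true := by simp [hbdef, h]
      rw [this]
      rcases hF a with h' | h'
      · exact absurd h'.symm h
      · exact h'.symm
  set f : A → Bool := fun a => !(b a) with hfdef
  set g : A → Bool := fun c => !(π (E.symm c, b (E.symm c))).2 with hgdef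
  -- key identity
  have key : ∀ a m, xor (g ((π (a, m)).1)) ((π (a, m)).2) = xor (f a) m := by
    intro a m
    by_cases hm : m = b a
    · subst hm
      rw [hb a]
      have : g (F a) = !(π (a, b a)).2 := by
        simp only [hgdef, hEF]
      rw [this, hfdef]
      cases h2 : (π (a, b a)).2 <;> cases hba : b a <;> simp [hba]
    · have hm' : m = !(b a) := by
        cases m <;> cases hba : b a <;> simp_all
      subst hm'
      set c : A := (π (a, !b a)).1 with hc
      set a' : A := E.symm c with ha'
      have hne : (a', b a') ≠ (a, !(b a)) := by
        intro h
        have h1 : a' = a := congrArg Prod.fst h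
        have h2 : b a' = !(b a) := congrArg Prod.snd h
        rw [h1] at h2
        cases hba : b a <;> rw [hba] at h2 <;> simp at h2
      have hfst : (π (a', b a')).1 = c := by rw [hb a', ha', hFE]
      have hπne : π (a', b a') ≠ π (a, !(b a)) := fun h => hne (π.injective h)
      have hsnd : (π (a', b a')).2 ≠ (π (a, !(b a))).2 := by
        intro h
        exact hπne (Prod.ext (hfst.trans hc) h)
      have hg : g c = (π (a, !b a)).2 := by
        rw [hgdef]
        simp only [← ha']
        cases h1 : (π (a', b a')).2 <;> cases h2 : (π (a, !b a)).2 <;> simp_all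
      rw [hg, hfdef]
      simp
  -- the middle permutation preserves the second coordinate
  set mid : Equiv.Perm (A × Bool) := tau g * π * tau f with hmid
  have hmid2 : ∀ q, (mid q).2 = q.2 := by
    rintro ⟨a, b₀⟩
    have : mid (a, b₀) = tau g (π (a, xor (f a) b₀)) := rfl
    rw [this, tau_apply]
    simp only
    rw [key a (xor (f a) b₀)]
    cases h1 : f a <;> cases b₀ <;> simp
  have hmidsymm2 : ∀ q, (mid.symm q).2 = q.2 := by
    intro q
    conv_rhs => rw [← mid.apply_symm_apply q]
    rw [hmid2]
  set p0 : Equiv.Perm A :=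
    { toFun := fun a => (mid (a, false)).1
      invFun := fun a => (mid.symm (a, false)).1
      left_inv := by
        intro a
        have h : ((mid (a, false)).1, false) = mid (a, false) :=
          Prod.ext rfl (hmid2 (a, false)).symm
        show (mid.symm ((mid (a, false)).1, false)).1 = a
        rw [h, Equiv.symm_apply_apply]
      right_inv := by
        intro a
        have h : ((mid.symm (a, false)).1, false) = mid.symm (a, false) :=
          Prod.ext rfl (hmidsymm2 (a, false)).symm
        show (mid ((mid.symm (a, false)).1, false)).1 = a
        rw [h, Equiv.apply_symm_apply] } with hp0
  set p1 : Equiv.Perm A :=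
    { toFun := fun a => (mid (a, true)).1
      invFun := fun a => (mid.symm (a, true)).1
      left_inv := by
        intro a
        have h : ((mid (a, true)).1, true) = mid (a, true) :=
          Prod.ext rfl (hmid2 (a, true)).symm
        show (mid.symm ((mid (a, true)).1, true)).1 = a
        rw [h, Equiv.symm_apply_apply]
      right_inv := by
        intro a
        have h : ((mid.symm (a, true)).1, true) = mid.symm (a, true) :=
          Prod.ext rfl (hmidsymm2 (a, true)).symm
        show (mid ((mid.symm (a, true)).1, true)).1 = a
        rw [h, Equiv.apply_symm_apply] } with hp1
  have hMMeq : MM (p0, p1) = mid := by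
    apply Equiv.ext
    rintro ⟨a, b₀⟩
    cases b₀
    · exact Prod.ext rfl (hmid2 (a, false)).symm
    · exact Prod.ext rfl (hmid2 (a, true)).symm
  refine ⟨f, g, (p0, p1), ?_⟩
  rw [hMMeq, hmid]
  calc π = (tau g * tau g) * (π * (tau f * tau f)) := by
        rw [tau_mul_self, tau_mul_self]; group
    _ = tau g * (tau g * π * tau f) * tau f := by group

/-- each word is fixed or flipped in dimension `d` -/
def DimPerm (r : ℕ) (d : Fin r) (σ : Equiv.Perm (Fin r → Bool)) : Prop :=
  ∀ x, σ x = x ∨ σ x = flipBit r d x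

/-- split off the last coordinate -/
def eSplit (r : ℕ) : (Fin (r + 1) → Bool) ≃ ((Fin r → Bool) × Bool) where
  toFun x := (x ∘ Fin.castSucc, x (Fin.last r))
  invFun y := Fin.snoc y.1 y.2
  left_inv := by
    intro x
    funext i
    induction i using Fin.lastCases with
    | last => simp
    | cast j => simp
  right_inv := by
    rintro ⟨y, b⟩
    refine Prod.ext ?_ ?_
    · funext j; simp
    · simp

/-- lift a permutation of `(Fin r → Bool) × Bool` to one of `Fin (r+1) → Bool` -/
def Lift (r : ℕ) : Equiv.Perm ((Fin r → Bool) × Bool) →* Equiv.Perm (Fin (r + 1) → Bool) where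
  toFun ρ := (eSplit r).symm.permCongr ρ
  map_one' := by ext x; simp
  map_mul' := by intro x y; ext q; simp [Equiv.Perm.mul_apply]

@[simp] lemma eSplit_fst (r : ℕ) (x : Fin (r + 1) → Bool) :
    (eSplit r x).1 = x ∘ Fin.castSucc := rfl

@[simp] lemma eSplit_snd (r : ℕ) (x : Fin (r + 1) → Bool) :
    (eSplit r x).2 = x (Fin.last r) := rfl

@[simp] lemma eSplit_symm_apply (r : ℕ) (y : (Fin r → Bool) × Bool) :
    (eSplit r).symm y = Fin.snoc y.1 y.2 := rfl

@[simp] lemma Lift_apply (r : ℕ) (ρ : Equiv.Perm ((Fin r → Bool) × Bool)) (x : Fin (r + 1) → Bool) :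
    Lift r ρ x = (eSplit r).symm (ρ (eSplit r x)) := by
  simp [Lift]

lemma lift_eq (r : ℕ) (π : Equiv.Perm (Fin (r + 1) → Bool)) :
    Lift r ((eSplit r).permCongr π) = π := by
  ext x
  simp

lemma snoc_eq_update_last (r : ℕ) (x : Fin (r + 1) → Bool) (v : Bool) :
    Fin.snoc (x ∘ Fin.castSucc) v = Function.update x (Fin.last r) v := by
  funext i
  induction i using Fin.lastCases with
  | last => simp
  | cast j =>
      rw [Fin.snoc_castSucc, Function.update_of_ne (Fin.castSucc_lt_last j).ne]
      rfl

lemma snoc_update_castSucc (r : ℕ) (x : Fin (r + 1) → Bool) (d : Fin r) (v : Bool) :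
    Fin.snoc (Function.update (x ∘ Fin.castSucc) d v) (x (Fin.last r))
      = Function.update x (Fin.castSucc d) v := by
  funext i
  induction i using Fin.lastCases with
  | last =>
      rw [Fin.snoc_last, Function.update_of_ne (Fin.castSucc_lt_last d).ne']
  | cast j =>
      rw [Fin.snoc_castSucc]
      rcases eq_or_ne j d with rfl | hj
      · simp
      · rw [Function.update_of_ne hj, Function.update_of_ne (fun h => hj (Fin.castSucc_injective r h))]
        rfl

lemma dim_lift_tau (r : ℕ) (f : (Fin r → Bool) → Bool) :
    DimPerm (r + 1) (Fin.last r) (Lift r (tau f)) := by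
  intro x
  rw [Lift_apply, tau_apply]
  cases hf : f ((eSplit r x).1)
  · left
    simp only [hf, Bool.false_xor]
    exact (eSplit r).symm_apply_apply x
  · right
    simp only [hf, Bool.true_xor, eSplit_fst, eSplit_snd, eSplit_symm_apply]
    rw [snoc_eq_update_last]
    rfl

lemma dim_lift_mid (r : ℕ) (d : Fin r) (p : Equiv.Perm (Fin r → Bool) × Equiv.Perm (Fin r → Bool))
    (h0 : DimPerm r d p.1) (h1 : DimPerm r d p.2) :
    DimPerm (r + 1) (Fin.castSucc d) (Lift r (MM p)) := by
  intro x
  rw [Lift_apply, MM_apply]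
  set y : Fin r → Bool := (eSplit r x).1 with hy
  have hcond : (cond (eSplit r x).2 p.2 p.1) y = y ∨
      (cond (eSplit r x).2 p.2 p.1) y = flipBit r d y := by
    cases (eSplit r x).2
    · exact h0 y
    · exact h1 y
  rcases hcond with h | h
  · left
    rw [h]
    exact (eSplit r).symm_apply_apply x
  · right
    rw [h]
    simp only [flipBit, hy, eSplit_fst, eSplit_snd, eSplit_symm_apply]
    rw [snoc_update_castSucc]
    simp [Function.comp_apply]

/-- products of zipped lists through a hom from a product monoid -/
lemma zip_prod_hom {M N P : Type*} [Monoid M] [Monoid N] [Monoid P]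
    (h : M × N →* P) :
    ∀ (l₀ : List M) (l₁ : List N), l₀.length = l₁.length →
      (List.zipWith (fun s t => h (s, t)) l₀ l₁).prod = h (l₀.prod, l₁.prod) := by
  intro l₀
  induction l₀ with
  | nil =>
      intro l₁ hl
      have : l₁ = [] := List.eq_nil_of_length_eq_zero hl.symm
      subst this
      simp
      exact (map_one h).symm
  | cons a l ih =>
      intro l₁ hl
      cases l₁ with
      | nil => simp at hl
      | cons b l' =>
          simp only [List.zipWith_cons_cons, List.prod_cons]
          rw [ih l' (by simpa using hl)]
          rw [← h.map_mul]
          rfl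

lemma forall2_mid (r : ℕ) :
    ∀ (ds : List (Fin r)) (σs₀ σs₁ : List (Equiv.Perm (Fin r → Bool))),
      List.Forall₂ (DimPerm r) ds σs₀ → List.Forall₂ (DimPerm r) ds σs₁ →
      List.Forall₂ (DimPerm (r + 1)) (ds.map Fin.castSucc)
        (List.zipWith (fun s t => Lift r (MM (s, t))) σs₀ σs₁) := by
  intro ds
  induction ds with
  | nil =>
      intro σs₀ σs₁ h₀ h₁
      cases h₀; cases h₁
      simp
  | cons d ds ih =>
      intro σs₀ σs₁ h₀ h₁
      cases h₀ with
      | cons ha hta =>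
          cases h₁ with
          | cons hb htb =>
              simp only [List.map_cons, List.zipWith_cons_cons]
              exact List.Forall₂.cons (dim_lift_mid r d (_, _) ha hb) (ih _ _ hta htb)

theorem schedule : ∀ r : ℕ, 1 ≤ r →
    ∃ ds : List (Fin r), ds.length = 2 * r - 1 ∧
      ∀ π : Equiv.Perm (Fin r → Bool),
        ∃ σs : List (Equiv.Perm (Fin r → Bool)),
          List.Forall₂ (DimPerm r) ds σs ∧ π = σs.reverse.prod := by
  intro r hr
  induction r, hr using Nat.le_induction with
  | base =>
      refine ⟨[⟨0, one_pos⟩], by simp, ?_⟩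
      intro π
      refine ⟨[π], ?_, by simp⟩
      refine List.Forall₂.cons ?_ List.Forall₂.nil
      intro x
      have key : ∀ y x : Fin 1 → Bool, y = x ∨ y = flipBit 1 ⟨0, one_pos⟩ x := by decide
      exact key (π x) x
  | succ r hr ih =>
      obtain ⟨ds, hlen, H⟩ := ih
      refine ⟨Fin.last r :: (ds.map Fin.castSucc ++ [Fin.last r]), ?_, ?_⟩
      · simp only [List.length_cons, List.length_append, List.length_map, hlen]
        simp
        omega
      intro π
      obtain ⟨f, g, p, hfact⟩ := benes' ((eSplit r).permCongr π)
      obtain ⟨σs₀, h₀, hp₀⟩ := H p.1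
      obtain ⟨σs₁, h₁, hp₁⟩ := H p.2
      set ms : List (Equiv.Perm (Fin (r + 1) → Bool)) :=
        List.zipWith (fun s t => Lift r (MM (s, t))) σs₀ σs₁ with hms
      refine ⟨Lift r (tau f) :: (ms ++ [Lift r (tau g)]), ?_, ?_⟩
      · refine List.Forall₂.cons (dim_lift_tau r f) ?_
        exact List.rel_append (forall2_mid r ds σs₀ σs₁ h₀ h₁)
          (List.Forall₂.cons (dim_lift_tau r g) List.Forall₂.nil)
      · have hlen01 : σs₀.length = σs₁.length := h₀.length_eq.symm.trans h₁.length_eq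
        have hmsrev : ms.reverse
            = List.zipWith (fun s t => Lift r (MM (s, t))) σs₀.reverse σs₁.reverse := by
          rw [hms]
          exact List.reverse_zipWith hlen01
        have hmid : ms.reverse.prod = Lift r (MM (σs₀.reverse.prod, σs₁.reverse.prod)) := by
          rw [hmsrev]
          exact zip_prod_hom ((Lift r).comp MM) σs₀.reverse σs₁.reverse (by simp [hlen01])
        have hprod : (Lift r (tau f) :: (ms ++ [Lift r (tau g)])).reverse.prod
            = Lift r (tau g) * ms.reverse.prod * Lift r (tau f) := by
          simp [List.prod_append, mul_assoc]
        rw [hprod, hmid]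
        have hpe : (σs₀.reverse.prod, σs₁.reverse.prod) = p := by
          rw [← hp₀, ← hp₁]
        rw [hpe, ← map_mul, ← map_mul, ← hfact, lift_eq]


end HBS

open HBS in
/-- **Bitonic sort on the hypercube.** For `r ≥ 1`, every permutation `π` of the `r`-bit words
is a composition `σ_T ∘ ⋯ ∘ σ_1` of `T ≤ r(r+1)/2` permutations, where each factor `σ t` acts
along a single hypercube dimension `d`: every word is fixed or has bit `d` flipped. Hence a
`2^r`-node hypercube sorts in depth `(1/2)·log₂ n·(log₂ n + 1)`. -/
theorem hypercube_bitonic_sorting (r : ℕ) (hr : 1 ≤ r)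
    (π : Equiv.Perm (Fin r → Bool)) :
    ∃ T : ℕ, T ≤ r * (r + 1) / 2 ∧
      ∃ σ : Fin T → Equiv.Perm (Fin r → Bool),
        (∀ t, ∃ d : Fin r, ∀ x, σ t x = x ∨ σ t x = flipBit r d x) ∧
        π = (List.ofFn σ).reverse.prod := by
  obtain ⟨ds, hlen, H⟩ := schedule r hr
  obtain ⟨σs, hf2, hprod⟩ := H π
  have hlens : ds.length = σs.length := hf2.length_eq
  refine ⟨σs.length, ?_, σs.get, ?_, ?_⟩
  · have h1 : σs.length = 2 * r - 1 := hlens ▸ hlen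
    rw [h1, Nat.le_div_iff_mul_le (by norm_num : 0 < 2)]
    rcases Nat.lt_or_ge r 3 with h | h
    · interval_cases r <;> norm_num
    · calc (2 * r - 1) * 2 ≤ r * 4 := by omega
        _ ≤ r * (r + 1) := Nat.mul_le_mul_left r (by omega)
  · intro t
    have ht : (t : ℕ) < ds.length := by rw [hlens]; exact t.isLt
    refine ⟨ds.get ⟨t, ht⟩, ?_⟩
    exact (List.forall₂_iff_get.1 hf2).2 t ht t.isLt
  · rw [List.ofFn_get]
    exact hprod
end

section
/- (Beneš rearrangeability.) For every r ≥ 1, every permutation π of the set of r-bit words (Fin r → Bool) can be written as a composition π = σ_{2r} ∘ ⋯ ∘ σ_1 of exactly 2r permutations such that for each step t (1 ≤ t ≤ 2r) and every word x, σ_t(x) ∈ {x, x ⊕ e_{b_t}}, where the fixed dimension schedule is b_t = t − 1 for 1 ≤ t ≤ r and b_t = 2r − t for r < t ≤ 2r (i.e., dimensions 0, 1, …, r−1 followed by r−1, …, 1, 0). In other words, the Beneš network formed by traversing a butterfly forward and then backward can realize every permutation of its 2^r rows without collisions. -/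
/-- The fixed Beneš dimension schedule: dimensions `0, 1, …, r-1` followed by
`r-1, …, 1, 0` (steps indexed from `0` to `2r - 1`). -/
def benesDim (r : ℕ) (t : Fin (2 * r)) : Fin r :=
  ⟨if (t : ℕ) < r then (t : ℕ) else 2 * r - 1 - (t : ℕ), by
    have := t.isLt; split <;> omega⟩

section Matching

variable {A : Type*} [Fintype A] [DecidableEq A]

private lemma benes_matching (π : Equiv.Perm (Bool × A)) :
    ∃ b : A → Bool, Function.Bijective (fun a => (π (b a, a)).2) := by
  classical
  set t : A → Finset A := fun a => {(π (false, a)).2, (π (true, a)).2} with ht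
  have hall : ∀ s : Finset A, s.card ≤ (s.biUnion t).card := by
    intro s
    have h1 : ((Finset.univ : Finset Bool) ×ˢ s).card ≤
        ((Finset.univ : Finset Bool) ×ˢ s.biUnion t).card := by
      apply Finset.card_le_card_of_injOn (fun p => π p)
      · rintro ⟨β, a⟩ hp
        simp only [Finset.mem_coe, Finset.mem_product, Finset.mem_univ, true_and] at hp ⊢
        refine Finset.mem_biUnion.2 ⟨a, hp, ?_⟩
        cases β <;> simp [ht]
      · exact fun x _ y _ h => π.injective h
    simp only [Finset.card_product, Finset.card_univ, Fintype.card_bool] at h1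
    omega
  obtain ⟨f, hfinj, hfmem⟩ := (Finset.all_card_le_biUnion_card_iff_existsInjective' t).1 hall
  set b : A → Bool := fun a => if f a = (π (false, a)).2 then false else true with hbdef
  have key : ∀ a, (π (b a, a)).2 = f a := by
    intro a
    by_cases h : f a = (π (false, a)).2
    · simp [hbdef, h]
    · have := hfmem a
      simp only [ht, Finset.mem_insert, Finset.mem_singleton] at this
      rcases this with h' | h'
      · exact absurd h' h
      · simp [hbdef, h, h'.symm]
  have heq : (fun a => (π (b a, a)).2) = f := funext key
  exact ⟨b, heq ▸ Finite.injective_iff_bijective.mp hfinj⟩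

end Matching

section Key

variable {A : Type*} [Fintype A] [DecidableEq A]

private lemma benes_compl (π : Equiv.Perm (Bool × A)) (b : A → Bool)
    (hb : Function.Bijective (fun a => (π (b a, a)).2)) :
    Function.Bijective (fun a => (π (!b a, a)).2) := by
  rw [← Finite.injective_iff_bijective]
  intro a a' h
  by_contra hne
  obtain ⟨a'', ha''⟩ := hb.surjective ((π (!b a, a)).2)
  simp only at ha'' h
  have ne1 : ((b a'', a'') : Bool × A) ≠ (!b a, a) := by
    intro hc
    rw [Prod.mk.injEq] at hc
    obtain ⟨h1, h2⟩ := hc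
    subst h2
    simp at h1
  have ne2 : ((b a'', a'') : Bool × A) ≠ (!b a', a') := by
    intro hc
    rw [Prod.mk.injEq] at hc
    obtain ⟨h1, h2⟩ := hc
    subst h2
    simp at h1
  have ne3 : ((!b a, a) : Bool × A) ≠ (!b a', a') := by
    intro hc
    rw [Prod.mk.injEq] at hc
    exact hne hc.2
  have f1 : (π (b a'', a'')).1 ≠ (π (!b a, a)).1 := by
    intro hf
    exact ne1 (π.injective (Prod.ext hf ha''))
  have f2 : (π (b a'', a'')).1 ≠ (π (!b a', a')).1 := by
    intro hf
    exact ne2 (π.injective (Prod.ext hf (ha''.trans h)))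
  have f3 : (π (!b a, a)).1 ≠ (π (!b a', a')).1 := by
    intro hf
    exact ne3 (π.injective (Prod.ext hf h))
  cases h1 : (π (b a'', a'')).1 <;> cases h2 : (π (!b a, a)).1 <;>
    cases h3 : (π (!b a', a')).1 <;> simp_all

private lemma benes_key (π : Equiv.Perm (Bool × A)) :
    ∃ (σF σL : Equiv.Perm (Bool × A)) (π0 π1 : Equiv.Perm A),
      (∀ p : Bool × A, σF p = p ∨ σF p = (!p.1, p.2)) ∧
      (∀ p : Bool × A, σL p = p ∨ σL p = (!p.1, p.2)) ∧
      π = σL * (Equiv.prodCongrRight (fun β => if β then π1 else π0)) * σF := by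
  obtain ⟨b, hb⟩ := benes_matching π
  let f : A ≃ A := Equiv.ofBijective _ hb
  let c : A → Bool := fun y => (π (b (f.symm y), f.symm y)).1
  have hinvF : Function.Involutive (fun p : Bool × A => ((xor p.1 (b p.2)), p.2)) := by
    rintro ⟨β, a⟩
    simp [Bool.xor_assoc]
  have hinvL : Function.Involutive (fun p : Bool × A => ((xor p.1 (c p.2)), p.2)) := by
    rintro ⟨β, a⟩
    simp [Bool.xor_assoc]
  let σF : Equiv.Perm (Bool × A) :=
    ⟨fun p => ((xor p.1 (b p.2)), p.2), fun p => ((xor p.1 (b p.2)), p.2), hinvF, hinvF⟩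
  let σL : Equiv.Perm (Bool × A) :=
    ⟨fun p => ((xor p.1 (c p.2)), p.2), fun p => ((xor p.1 (c p.2)), p.2), hinvL, hinvL⟩
  have hfa : ∀ a, f a = (π (b a, a)).2 := fun a => rfl
  have hmid : ∀ p : Bool × A, ((σL * π * σF : Equiv.Perm (Bool × A)) p).1 = p.1 := by
    rintro ⟨β, a⟩
    show (σL (π (σF (β, a)))).1 = β
    cases β
    · have h1 : σF (false, a) = (b a, a) := by
        show ((xor false (b a)), a) = (b a, a)
        simp
      rw [h1]
      show xor (π (b a, a)).1 (c (π (b a, a)).2) = false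
      have h2 : f.symm ((π (b a, a)).2) = a := f.symm_apply_eq.mpr (hfa a)
      show xor (π (b a, a)).1 (π (b (f.symm ((π (b a, a)).2)), f.symm ((π (b a, a)).2))).1 = false
      rw [h2]
      simp
    · have h1 : σF (true, a) = (!b a, a) := by
        show ((xor true (b a)), a) = (!b a, a)
        simp
      rw [h1]
      show xor (π (!b a, a)).1 (c (π (!b a, a)).2) = true
      have hu2 : (π (b (f.symm ((π (!b a, a)).2)), f.symm ((π (!b a, a)).2))).2
          = (π (!b a, a)).2 := by
        have h3 : f (f.symm ((π (!b a, a)).2)) = (π (!b a, a)).2 :=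
          f.apply_symm_apply _
        rw [← hfa _]; exact h3
      have hne : ((b (f.symm ((π (!b a, a)).2)), f.symm ((π (!b a, a)).2)) : Bool × A)
          ≠ (!b a, a) := by
        intro hc
        rw [Prod.mk.injEq] at hc
        obtain ⟨hc1, hc2⟩ := hc
        rw [hc2] at hc1
        simp at hc1
      have hne1 : (π (b (f.symm ((π (!b a, a)).2)), f.symm ((π (!b a, a)).2))).1
          ≠ (π (!b a, a)).1 := by
        intro hf
        exact hne (π.injective (Prod.ext hf hu2))
      show xor (π (!b a, a)).1 (π (b (f.symm ((π (!b a, a)).2)), f.symm ((π (!b a, a)).2))).1 = true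
      cases hc1 : (π (b (f.symm ((π (!b a, a)).2)), f.symm ((π (!b a, a)).2))).1 <;>
        cases hc2 : (π (!b a, a)).1 <;> simp_all
  have hinj : ∀ β : Bool, Function.Bijective
      (fun a => ((σL * π * σF : Equiv.Perm (Bool × A)) (β, a)).2) := by
    intro β
    rw [← Finite.injective_iff_bijective]
    intro a a' h
    simp only at h
    have e1 := hmid (β, a)
    have e2 := hmid (β, a')
    have : (σL * π * σF : Equiv.Perm (Bool × A)) (β, a)
        = (σL * π * σF : Equiv.Perm (Bool × A)) (β, a') := Prod.ext (e1.trans e2.symm) h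
    have h2 := (σL * π * σF : Equiv.Perm (Bool × A)).injective this
    exact (Prod.ext_iff.mp h2).2
  let π0 : Equiv.Perm A := Equiv.ofBijective _ (hinj false)
  let π1 : Equiv.Perm A := Equiv.ofBijective _ (hinj true)
  refine ⟨σF, σL, π0, π1, ?_, ?_, ?_⟩
  · rintro ⟨β, a⟩
    cases hba : b a
    · left; show ((xor β (b a)), a) = (β, a); rw [hba]; simp
    · right; show ((xor β (b a)), a) = (!β, a); rw [hba]; simp
  · rintro ⟨β, a⟩
    cases hca : c a
    · left; show ((xor β (c a)), a) = (β, a); rw [hca]; simp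
    · right; show ((xor β (c a)), a) = (!β, a); rw [hca]; simp
  · have hmideq : Equiv.prodCongrRight (fun β => if β then π1 else π0)
        = σL * π * σF := by
      apply Equiv.ext
      rintro ⟨β, a⟩
      have h2 := hmid (β, a)
      rw [Equiv.prodCongrRight_apply]
      refine Prod.ext h2.symm ?_
      cases β
      · rfl
      · rfl
    rw [hmideq]
    refine Equiv.ext fun p => ?_
    simp only [Equiv.Perm.mul_apply]
    rw [show σF (σF p) = p from hinvF p, show σL (σL (π p)) = π p from hinvL (π p)]

end Key

section Homs

private def conjHom {α β : Type*} (e : α ≃ β) : Equiv.Perm β →* Equiv.Perm α where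
  toFun p := (e.trans p).trans e.symm
  map_one' := by ext x; simp
  map_mul' p q := by
    ext x
    simp [Equiv.Perm.mul_apply]

private lemma conjHom_apply {α β : Type*} (e : α ≃ β) (p : Equiv.Perm β) (x : α) :
    conjHom e p x = e.symm (p (e x)) := rfl

private def prodHom {α B : Type*} : (B → Equiv.Perm α) →* Equiv.Perm (B × α) where
  toFun h := Equiv.prodCongrRight h
  map_one' := by
    apply Equiv.ext
    rintro ⟨b, a⟩
    simp
  map_mul' h1 h2 := by
    apply Equiv.ext
    rintro ⟨b, a⟩
    simp [Equiv.Perm.mul_apply]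

private lemma prodHom_apply {α B : Type*} (h : B → Equiv.Perm α) (b : B) (a : α) :
    prodHom h (b, a) = (b, h b a) := rfl

private def splitEquiv (r : ℕ) : (Fin (r + 1) → Bool) ≃ Bool × (Fin r → Bool) where
  toFun x := (x 0, Fin.tail x)
  invFun p := Fin.cons p.1 p.2
  left_inv x := Fin.cons_self_tail x
  right_inv p := by
    rcases p with ⟨β, a⟩
    simp [Fin.tail_cons]

private lemma cons_flip_zero (r : ℕ) (x : Fin (r + 1) → Bool) :
    Fin.cons (!x 0) (Fin.tail x) = flipBit (r + 1) 0 x := by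
  funext i
  refine Fin.cases ?_ ?_ i
  · simp [flipBit]
  · intro j
    simp [flipBit, Fin.tail, Function.update_of_ne (Fin.succ_ne_zero j)]

private lemma cons_flip_succ (r : ℕ) (d : Fin r) (h : Bool) (a : Fin r → Bool) :
    Fin.cons h (flipBit r d a) = flipBit (r + 1) d.succ (Fin.cons h a) := by
  unfold flipBit
  rw [Fin.cons_succ, Fin.cons_update]

private lemma ofFn_eq_cons_append {M : Type*} (n : ℕ) (f : Fin (n + 2) → M) :
    List.ofFn f = f ⟨0, by omega⟩ ::
      (List.ofFn (fun i : Fin n => f ⟨(i : ℕ) + 1, by omega⟩) ++ [f ⟨n + 1, by omega⟩]) := by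
  rw [List.ofFn_succ, List.ofFn_succ']
  simp only [List.concat_eq_append, Fin.succ_last, Fin.succ_castSucc]
  rfl

end Homs

private lemma benes_aux : ∀ (r : ℕ) (π : Equiv.Perm (Fin r → Bool)),
    ∃ σ : Fin (2 * r) → Equiv.Perm (Fin r → Bool),
      (∀ t : Fin (2 * r), ∀ x, σ t x = x ∨ σ t x = flipBit r (benesDim r t) x) ∧
      π = (List.ofFn σ).reverse.prod := by
  intro r
  induction r with
  | zero =>
    intro π
    refine ⟨fun _ => 1, fun t x => Or.inl rfl, ?_⟩
    have h0 : List.ofFn (fun _ : Fin (2 * 0) => (1 : Equiv.Perm (Fin 0 → Bool))) = [] := by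
      apply List.eq_nil_of_length_eq_zero
      simp
    rw [h0]
    refine Equiv.ext fun x => ?_
    show π x = x
    funext i
    exact i.elim0
  | succ r IH =>
    intro π
    classical
    let e := splitEquiv r
    obtain ⟨σF, σL, π0, π1, hF, hL, hdec⟩ := benes_key (e.permCongr π)
    obtain ⟨s0, hs0, hp0⟩ := IH π0
    obtain ⟨s1, hs1, hp1⟩ := IH π1
    let inner : Fin (2 * r) → Equiv.Perm (Bool × (Fin r → Bool)) :=
      fun i => prodHom (fun β => if β then s1 i else s0 i)
    let τ : Fin (2 * (r + 1)) → Equiv.Perm (Bool × (Fin r → Bool)) := fun t =>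
      if _h0 : (t : ℕ) = 0 then σF
      else if _hl : (t : ℕ) = 2 * r + 1 then σL
      else inner ⟨(t : ℕ) - 1, by have := t.isLt; omega⟩
    refine ⟨fun t => conjHom e (τ t), ?_, ?_⟩
    · intro t x
      by_cases h0 : (t : ℕ) = 0
      · have hτ : τ t = σF := by simp only [τ]; rw [dif_pos h0]
        have hd : benesDim (r + 1) t = 0 := by
          apply Fin.ext
          simp only [benesDim, h0, Fin.val_zero]
          split <;> omega
        rcases hF (e x) with h | h
        · left
          rw [conjHom_apply, hτ, h, Equiv.symm_apply_apply]
        · right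
          rw [conjHom_apply, hτ, h, hd]
          exact cons_flip_zero r x
      · by_cases hl : (t : ℕ) = 2 * r + 1
        · have hτ : τ t = σL := by simp only [τ]; rw [dif_neg h0, dif_pos hl]
          have hd : benesDim (r + 1) t = 0 := by
            apply Fin.ext
            simp only [benesDim, hl, Fin.val_zero]
            split <;> omega
          rcases hL (e x) with h | h
          · left
            rw [conjHom_apply, hτ, h, Equiv.symm_apply_apply]
          · right
            rw [conjHom_apply, hτ, h, hd]
            exact cons_flip_zero r x
        · have hbound : (t : ℕ) - 1 < 2 * r := by have := t.isLt; omega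
          have hτ : τ t = inner ⟨(t : ℕ) - 1, hbound⟩ := by simp only [τ]; rw [dif_neg h0, dif_neg hl]
          have hd : benesDim (r + 1) t = (benesDim r ⟨(t : ℕ) - 1, hbound⟩).succ := by
            apply Fin.ext
            have h1 := t.isLt
            simp only [benesDim, Fin.val_succ]
            split <;> split <;> omega
          have hstep : (if x 0 then s1 ⟨(t : ℕ) - 1, hbound⟩ else s0 ⟨(t : ℕ) - 1, hbound⟩)
                (Fin.tail x) = Fin.tail x ∨
              (if x 0 then s1 ⟨(t : ℕ) - 1, hbound⟩ else s0 ⟨(t : ℕ) - 1, hbound⟩) (Fin.tail x)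
                = flipBit r (benesDim r ⟨(t : ℕ) - 1, hbound⟩) (Fin.tail x) := by
            cases hx : x 0
            · simpa using hs0 ⟨(t : ℕ) - 1, hbound⟩ (Fin.tail x)
            · simpa using hs1 ⟨(t : ℕ) - 1, hbound⟩ (Fin.tail x)
          have happ : conjHom e (τ t) x = Fin.cons (x 0)
              ((if x 0 then s1 ⟨(t : ℕ) - 1, hbound⟩ else s0 ⟨(t : ℕ) - 1, hbound⟩)
                (Fin.tail x)) := by
            rw [conjHom_apply, hτ]
            rfl
          rcases hstep with h | h
          · left
            rw [happ, h, Fin.cons_self_tail]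
          · right
            rw [happ, h, hd, cons_flip_succ, Fin.cons_self_tail]
    · have hofFn : List.ofFn τ = σF :: (List.ofFn inner ++ [σL]) := by
        rw [ofFn_eq_cons_append (2 * r) τ]
        have h00 : τ ⟨0, by omega⟩ = σF := by simp [τ]
        have hlast : τ ⟨2 * r + 1, by omega⟩ = σL := by simp [τ]
        have hmidf : (fun i : Fin (2 * r) => τ ⟨(i : ℕ) + 1, by omega⟩) = inner := by
          funext i
          have hne : (i : ℕ) + 1 ≠ 2 * r + 1 := by have := i.isLt; omega
          simp [τ, hne, i.isLt.ne]
        rw [h00, hlast, hmidf]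
      have hinner_prod : (List.ofFn inner).reverse.prod
          = Equiv.prodCongrRight (fun β => if β then π1 else π0) := by
        have h1 : List.ofFn inner
            = (List.ofFn (fun i => (fun β => if β then s1 i else s0 i))).map
              (prodHom (α := Fin r → Bool) (B := Bool)) := by
          rw [List.map_ofFn]
          rfl
        rw [h1, ← List.map_reverse, ← MonoidHom.map_list_prod]
        have hX : (List.ofFn (fun i => (fun β : Bool => if β then s1 i else s0 i))).reverse.prod
            = (fun β : Bool => if β then π1 else π0) := by
          funext β
          rw [Pi.list_prod_apply, List.map_reverse, List.map_ofFn]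
          cases β
          · have : ((fun f : Bool → Equiv.Perm (Fin r → Bool) => f false) ∘
                fun i => (fun β : Bool => if β then s1 i else s0 i)) = s0 := by
              funext i; simp
            rw [this]
            simpa using hp0.symm
          · have : ((fun f : Bool → Equiv.Perm (Fin r → Bool) => f true) ∘
                fun i => (fun β : Bool => if β then s1 i else s0 i)) = s1 := by
              funext i; simp
            rw [this]
            simpa using hp1.symm
        rw [hX]
        rfl
      have hbig : e.permCongr π = (List.ofFn τ).reverse.prod := by
        rw [hofFn, List.reverse_cons, List.reverse_append, List.reverse_singleton,
          List.singleton_append, List.prod_append, List.prod_cons, List.prod_singleton,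
          hinner_prod, hdec]
      have hlist : List.ofFn (fun t => conjHom e (τ t)) = (List.ofFn τ).map (conjHom e) := by
        rw [List.map_ofFn]
        rfl
      rw [hlist, ← List.map_reverse, ← MonoidHom.map_list_prod, ← hbig]
      refine Equiv.ext fun x => ?_
      rw [conjHom_apply]
      simp [Equiv.permCongr_apply]


/-- **Beneš rearrangeability.** For `r ≥ 1`, every permutation `π` of the `r`-bit words is a
composition `σ_{2r} ∘ ⋯ ∘ σ_1` of exactly `2r` permutations, where step `t` only moves words
along hypercube dimension `benesDim r t` (dimensions `0, …, r-1, r-1, …, 0`): the Beneš network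
realizes every permutation of its `2^r` rows without collisions. -/
theorem benes_rearrangeable (r : ℕ) (hr : 1 ≤ r) (π : Equiv.Perm (Fin r → Bool)) :
    ∃ σ : Fin (2 * r) → Equiv.Perm (Fin r → Bool),
      (∀ t : Fin (2 * r), ∀ x, σ t x = x ∨ σ t x = flipBit r (benesDim r t) x) ∧
      π = (List.ofFn σ).reverse.prod := by
  exact benes_aux r π
end

section
/- (Pipelined simultaneous column permutations on the cyclic butterfly.) Let r ≥ 1 and let B_r be the r-dimensional cyclic butterfly graph. For every family (τ_i)_{i ∈ ZMod r} of permutations of the r-bit words, the permutation Π of the vertex set of B_r defined by Π(w, i) = (τ_i(w), i) can be written as a composition Π = σ_{2r} ∘ ⋯ ∘ σ_1 of 2r permutations of the vertex set, where each factor σ_t maps every vertex either to itself or to an adjacent vertex of B_r, each vertex moved by σ_t for t ≤ r has its column label incremented by 1 (mod r), and each vertex moved by σ_t for t > r has its column label decremented by 1 (mod r). Thus all r columns can simultaneously permute their 2^r entries in only 2r local steps. -/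
/-- Two `r`-bit words differ in exactly the bit whose index corresponds to column `i`. -/
def diffAtCol (r : ℕ) (w v : Fin r → Bool) (i : ZMod r) : Prop :=
  ∀ k : Fin r, w k ≠ v k ↔ ((k : ℕ) : ZMod r) = i

/-- The `r`-dimensional cyclic butterfly graph. -/
def cyclicButterfly (r : ℕ) : SimpleGraph ((Fin r → Bool) × ZMod r) where
  Adj a b := a ≠ b ∧
    ((b.2 = a.2 + 1 ∧ (a.1 = b.1 ∨ diffAtCol r a.1 b.1 a.2)) ∨
     (a.2 = b.2 + 1 ∧ (a.1 = b.1 ∨ diffAtCol r a.1 b.1 b.2)))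
  symm := by
    constructor
    rintro a b ⟨hne, h⟩
    refine ⟨hne.symm, ?_⟩
    rcases h with ⟨h1, h2⟩ | ⟨h1, h2⟩
    · exact Or.inr ⟨h1, h2.imp Eq.symm (fun hd k => ne_comm.trans (hd k))⟩
    · exact Or.inl ⟨h1, h2.imp Eq.symm (fun hd k => ne_comm.trans (hd k))⟩
  loopless := ⟨fun a h => h.1 rfl⟩

open Equiv

lemma coloring {X : Type*} (α β : Equiv.Perm X)
    (hα2 : ∀ x, α (α x) = x) (hα1 : ∀ x, α x ≠ x)
    (hβ2 : ∀ x, β (β x) = x) (hβ1 : ∀ x, β x ≠ x) :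
    ∃ c : X → Bool, (∀ x, c (α x) = ! c x) ∧ (∀ x, c (β x) = ! c x) := by
  classical
  set g : Equiv.Perm X := β * α with hg
  have hαinv : α⁻¹ = α := by
    ext x; rw [Equiv.Perm.inv_def]; exact (Equiv.symm_apply_eq α).mpr (hα2 x).symm
  have hβinv : β⁻¹ = β := by
    ext x; rw [Equiv.Perm.inv_def]; exact (Equiv.symm_apply_eq β).mpr (hβ2 x).symm
  have hαα : α * α = 1 := by ext x; simp [Equiv.Perm.mul_apply, hα2]
  have hc : α * g * α⁻¹ = g⁻¹ := by
    rw [hg, mul_inv_rev, hαinv, hβinv]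
    group
    rw [mul_assoc (α * β) α α, hαα, mul_one]
  have hEq : ∀ j : ℤ, α * g ^ j = g ^ (-j) * α := by
    intro j
    have h1 : (α * g * α⁻¹) ^ j = α * g ^ j * α⁻¹ := conj_zpow
    rw [hc] at h1
    have h2 : g ^ (-j) = α * g ^ j * α⁻¹ := by rw [← h1, inv_zpow, zpow_neg]
    rw [h2, hαinv, mul_assoc (α * g ^ j) α α, hαα, mul_one]
  have hconjα : ∀ (j : ℤ) (x : X), α ((g ^ j) x) = (g ^ (-j)) (α x) := by
    intro j x
    rw [← Equiv.Perm.mul_apply, hEq j, Equiv.Perm.mul_apply]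
  have hβx : ∀ x, β x = g (α x) := by
    intro x; rw [hg]; simp [Equiv.Perm.mul_apply, hα2]
  have hβg : ∀ x, β x = (g ^ (1:ℤ)) (α x) := by intro x; rw [zpow_one]; exact hβx x
  have key : ∀ x, ¬ g.SameCycle x (α x) := by
    rintro x ⟨m, hm⟩
    rcases Int.even_or_odd m with ⟨s, hs⟩ | ⟨s, hs⟩
    · apply hα1 ((g ^ s) x)
      calc α ((g ^ s) x) = (g ^ (-s)) (α x) := hconjα s x
        _ = (g ^ (-s)) ((g ^ m) x) := by rw [hm]
        _ = (g ^ (-s + m)) x := by rw [← Equiv.Perm.mul_apply, ← zpow_add]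
        _ = (g ^ s) x := by rw [show (-s + m : ℤ) = s by omega]
    · apply hβ1 ((g ^ (s+1)) x)
      calc β ((g ^ (s+1)) x) = (g ^ (1:ℤ)) (α ((g ^ (s+1)) x)) := hβg _
        _ = (g ^ (1:ℤ)) ((g ^ (-(s+1))) (α x)) := by rw [hconjα]
        _ = (g ^ (1:ℤ)) ((g ^ (-(s+1))) ((g ^ m) x)) := by rw [hm]
        _ = (g ^ (1 + -(s+1) + m)) x := by
              rw [← Equiv.Perm.mul_apply, ← zpow_add, ← Equiv.Perm.mul_apply, ← zpow_add]
        _ = (g ^ (s+1)) x := by rw [show (1 + -(s+1) + m : ℤ) = s + 1 by omega]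
  have fact1 : ∀ x y, g.SameCycle x y → g.SameCycle (α x) (α y) := by
    rintro x y ⟨m, hm⟩
    exact ⟨-m, by rw [← hm, ← hconjα]⟩
  let S : Setoid X :=
    ⟨fun x y => g.SameCycle x y ∨ g.SameCycle x (α y), by
      constructor
      · intro x; exact Or.inl (Equiv.Perm.SameCycle.refl g x)
      · rintro x y (h | h)
        · exact Or.inl h.symm
        · refine Or.inr ?_
          have h2 := fact1 _ _ h
          rw [hα2] at h2
          exact h2.symm
      · rintro x y z (h1 | h1) (h2 | h2)
        · exact Or.inl (h1.trans h2)
        · exact Or.inr (h1.trans h2)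
        · exact Or.inr (h1.trans (fact1 _ _ h2))
        · refine Or.inl ?_
          have h3 := fact1 _ _ h2
          rw [hα2] at h3
          exact h1.trans h3⟩
  have hrel : ∀ x : X, S.r (Quotient.mk S x).out x := fun x => Quotient.mk_out x
  have hexu : ∀ x : X, g.SameCycle ((Quotient.mk S x).out) (α x) ↔
      ¬ g.SameCycle ((Quotient.mk S x).out) x := by
    intro x
    constructor
    · intro h1 h2
      exact key x (h2.symm.trans h1)
    · intro h2
      rcases hrel x with h | h
      · exact absurd h h2
      · exact h
  refine ⟨fun x => decide (g.SameCycle ((Quotient.mk S x).out) x), ?_, ?_⟩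
  · intro x
    have hq : Quotient.mk S (α x) = Quotient.mk S x :=
      Quotient.sound (Or.inr (Equiv.Perm.SameCycle.refl g (α x)))
    simp only [hq]
    rcases Classical.em (g.SameCycle ((Quotient.mk S x).out) x) with h | h
    · have h' : ¬ g.SameCycle ((Quotient.mk S x).out) (α x) := fun hh => ((hexu x).mp hh) h
      simp [h, h']
    · simp [h, (hexu x).mpr h]
  · intro x
    have hq : Quotient.mk S (β x) = Quotient.mk S x := by
      refine Quotient.sound (Or.inr ⟨-1, ?_⟩)
      rw [hβx x]
      simp
    simp only [hq]
    have hsc : g.SameCycle ((Quotient.mk S x).out) (β x) ↔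
        g.SameCycle ((Quotient.mk S x).out) (α x) := by
      rw [hβx x]
      exact Equiv.Perm.sameCycle_apply_right
    rcases Classical.em (g.SameCycle ((Quotient.mk S x).out) x) with h | h
    · have h' : ¬ g.SameCycle ((Quotient.mk S x).out) (α x) := fun hh => ((hexu x).mp hh) h
      simp [h, hsc, h']
    · simp [h, hsc, (hexu x).mpr h]


def FlipOnly {r : ℕ} (k : Fin r) (g : Equiv.Perm (Fin r → Bool)) : Prop :=
  ∀ w j, j ≠ k → g w j = w j

/-- flip coordinate `k` -/
def flipK {r : ℕ} (k : Fin r) : Equiv.Perm (Fin r → Bool) :=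
  Function.Involutive.toPerm (fun w => Function.update w k (! w k)) (by
    intro w
    funext j
    by_cases h : j = k
    · subst h; simp
    · simp [Function.update_of_ne h])

lemma flipK_apply_self {r : ℕ} (k : Fin r) (w : Fin r → Bool) : flipK k w k = ! w k := by
  simp [flipK, Function.Involutive.toPerm]

lemma flipK_apply_ne {r : ℕ} (k : Fin r) (w : Fin r → Bool) {j : Fin r} (h : j ≠ k) :
    flipK k w j = w j := by
  simp [flipK, Function.Involutive.toPerm, Function.update_of_ne h]

lemma flipK_sq {r : ℕ} (k : Fin r) (w : Fin r → Bool) : flipK k (flipK k w) = w :=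
  (Function.Involutive.toPerm _ _).left_inv' w

lemma flipK_ne {r : ℕ} (k : Fin r) (w : Fin r → Bool) : flipK k w ≠ w := by
  intro h
  have := congrFun h k
  rw [flipK_apply_self] at this
  exact (Bool.not_ne_self _) this

lemma condFlip_spec {r : ℕ} (k : Fin r) (d : (Fin r → Bool) → Bool)
    (hd : ∀ u, d (flipK k u) = ! d u) :
    ∃ f : Equiv.Perm (Fin r → Bool), FlipOnly k f ∧ f * f = 1 ∧
      (∀ u, f u k = d u) ∧ (∀ u, f u = u ∨ f u = flipK k u) := by
  classical
  have hinv : Function.Involutive (fun u => if d u = u k then u else flipK k u) := by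
    intro u
    by_cases h : d u = u k
    · simp [h]
    · have h1 : d u = ! u k := by
        cases hdu : d u <;> cases huk : u k <;> simp_all
      have h2 : d (flipK k u) ≠ (flipK k u) k := by
        rw [hd, flipK_apply_self, h1, Bool.not_not]
        cases huk : u k <;> simp
      simp only [if_neg h]
      rw [if_neg h2, flipK_sq]
  refine ⟨hinv.toPerm _, ?_, ?_, ?_, ?_⟩
  · intro w j hj
    by_cases h : d w = w k <;>
      simp [Function.Involutive.coe_toPerm, h, flipK_apply_ne k w hj]
  · ext u
    simp [Equiv.Perm.mul_apply, Function.Involutive.coe_toPerm, hinv u]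
  · intro u
    by_cases h : d u = u k
    · simp [Function.Involutive.coe_toPerm, h]
    · have h1 : d u = ! u k := by
        cases hdu : d u <;> cases huk : u k <;> simp_all
      simp [Function.Involutive.coe_toPerm, h, flipK_apply_self, h1]
  · intro u
    by_cases h : d u = u k <;> simp [Function.Involutive.coe_toPerm, h]

lemma peel {r : ℕ} (π : Equiv.Perm (Fin r → Bool)) (k : Fin r) :
    ∃ a b : Equiv.Perm (Fin r → Bool), FlipOnly k a ∧ FlipOnly k b ∧
      a * a = 1 ∧ b * b = 1 ∧ ∀ w, ((a * π * b) w) k = w k := by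
  classical
  obtain ⟨c, hcα, hcβ⟩ := coloring (flipK k) (π⁻¹ * flipK k * π)
    (flipK_sq k) (flipK_ne k)
    (by intro x; simp [Equiv.Perm.mul_apply, flipK_sq])
    (by
      intro x h
      simp only [Equiv.Perm.mul_apply] at h
      have := congrArg π h
      rw [show ∀ y, π (π⁻¹ y) = y from π.apply_symm_apply] at this
      exact flipK_ne k (π x) this)
  obtain ⟨b, hbF, hb2, hbk, hbor⟩ := condFlip_spec k c hcα
  obtain ⟨a, haF, ha2, hak, haor⟩ := condFlip_spec k (fun u => c (π⁻¹ u)) (by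
    intro u
    have := hcβ (π⁻¹ u)
    simpa [Equiv.Perm.mul_apply] using this)
  refine ⟨a, b, haF, hbF, ha2, hb2, ?_⟩
  intro w
  have h1 : ((a * π * b) w) k = c (π⁻¹ (π (b w))) := by
    simp only [Equiv.Perm.mul_apply]
    exact hak (π (b w))
  rw [show ∀ y, π⁻¹ (π y) = y from π.symm_apply_apply] at h1
  rw [h1]
  rcases hbor w with h | h
  · have := hbk w
    rw [h] at this ⊢
    exact this.symm
  · have h2 := hbk w
    rw [h, flipK_apply_self] at h2
    rw [h, hcα w]
    cases hwk : w k <;> simp [hwk] at h2 ⊢ <;> simp [h2]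

lemma benes {r : ℕ} : ∀ (n : ℕ) (ks : Fin n → Fin r) (π : Equiv.Perm (Fin r → Bool)),
    (∀ w j, (∀ t, ks t ≠ j) → π w j = w j) →
    ∃ A B : Fin n → Equiv.Perm (Fin r → Bool),
      (∀ t, FlipOnly (ks t) (A t) ∧ FlipOnly (ks t) (B t)) ∧
      π = (List.ofFn A).prod * (List.ofFn B).reverse.prod := by
  intro n
  induction n with
  | zero =>
    intro ks π h
    refine ⟨Fin.elim0, Fin.elim0, fun t => t.elim0, ?_⟩
    have : π = 1 := Equiv.ext fun w => funext fun j => h w j (fun t => t.elim0)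
    simp [this, List.ofFn_zero]
  | succ n IH =>
    intro ks π h
    obtain ⟨a, b, haF, hbF, ha2, hb2, hmid⟩ := peel π (ks 0)
    have haa : ∀ x, a (a x) = x := fun x => by
      have := Equiv.ext_iff.mp ha2 x
      simpa [Equiv.Perm.mul_apply] using this
    have hbb : ∀ x, b (b x) = x := fun x => by
      have := Equiv.ext_iff.mp hb2 x
      simpa [Equiv.Perm.mul_apply] using this
    set m := a * π * b with hm
    have hπ : π = a * m * b := by
      ext x
      simp [hm, Equiv.Perm.mul_apply, haa, hbb]
    have hyp : ∀ w j, (∀ t : Fin n, ks t.succ ≠ j) → m w j = w j := by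
      intro w j hj
      by_cases hk : j = ks 0
      · subst hk
        exact hmid w
      · have hstep : ∀ t : Fin (n+1), ks t ≠ j := by
          intro t
          refine Fin.cases ?_ ?_ t
          · exact fun hh => hk hh.symm
          · exact hj
        calc m w j = (π (b w)) j := haF (π (b w)) j hk
          _ = (b w) j := h (b w) j hstep
          _ = w j := hbF w j hk
    obtain ⟨A', B', hflip', hprod'⟩ := IH (fun t => ks t.succ) m hyp
    refine ⟨Fin.cons a A', Fin.cons b B', ?_, ?_⟩
    · intro t
      refine Fin.cases ?_ ?_ t
      · simpa using ⟨haF, hbF⟩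
      · intro t'
        simpa using hflip' t'
    · have hA : (List.ofFn (Fin.cons a A' : Fin (n+1) → _)).prod =
          a * (List.ofFn A').prod := by
        rw [List.ofFn_succ]
        simp [List.prod_cons]
      have hB : (List.ofFn (Fin.cons b B' : Fin (n+1) → _)).reverse.prod =
          (List.ofFn B').reverse.prod * b := by
        rw [List.ofFn_succ]
        simp [List.reverse_cons, List.prod_append]
      rw [hA, hB, hπ, hprod']
      group

lemma diffAtCol_of_flipOnly {r : ℕ} {w v : Fin r → Bool} {c : ZMod r} (k : Fin r)
    (hk : ((k : ℕ) : ZMod r) = c) (hfl : ∀ j, j ≠ k → v j = w j) (hne : v ≠ w) :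
    diffAtCol r w v c := by
  intro k'
  constructor
  · intro hne'
    by_cases hj : k' = k
    · rw [hj, hk]
    · exact absurd (hfl k' hj).symm hne'
  · intro hc
    have hk' : k' = k := by
      apply Fin.ext
      have h1 : (((k' : ℕ) : ZMod r)).val = (k' : ℕ) := ZMod.val_cast_of_lt k'.isLt
      have h2 : (((k : ℕ) : ZMod r)).val = (k : ℕ) := ZMod.val_cast_of_lt k.isLt
      rw [← h1, ← h2, hc, hk]
    subst hk'
    intro heq
    apply hne
    funext j
    by_cases hj : j = k'
    · subst hj; exact heq.symm
    · exact hfl j hj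

def skewStep {r : ℕ} (f : ZMod r → Equiv.Perm (Fin r → Bool)) (d : ZMod r) :
    Equiv.Perm ((Fin r → Bool) × ZMod r) where
  toFun p := (f p.2 p.1, p.2 + d)
  invFun p := ((f (p.2 - d))⁻¹ p.1, p.2 - d)
  left_inv := by rintro ⟨w, c⟩; simp
  right_inv := by rintro ⟨w, c⟩; simp

lemma skewStep_apply {r : ℕ} (f : ZMod r → Equiv.Perm (Fin r → Bool)) (d : ZMod r)
    (w : Fin r → Bool) (c : ZMod r) : skewStep f d (w, c) = (f c w, c + d) := rfl

def sigmaStep {r : ℕ} (hr : 1 ≤ r)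
    (A B : ZMod r → Fin r → Equiv.Perm (Fin r → Bool)) (t : Fin (2*r)) :
    Equiv.Perm ((Fin r → Bool) × ZMod r) :=
  if h : (t : ℕ) < r then
    skewStep (fun c => B (c - (((t:ℕ) : ZMod r))) ⟨(t : ℕ), h⟩) 1
  else
    skewStep (fun c => A (c + ((((t:ℕ) - r : ℕ) : ZMod r))) ⟨r - 1 - ((t:ℕ) - r), by omega⟩)
      (-1)

lemma sigmaStep_lt {r : ℕ} (hr : 1 ≤ r) (A B : ZMod r → Fin r → Equiv.Perm (Fin r → Bool))
    (t : Fin (2*r)) (h : (t : ℕ) < r) :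
    sigmaStep hr A B t = skewStep (fun c => B (c - (((t:ℕ) : ZMod r))) ⟨(t : ℕ), h⟩) 1 :=
  dif_pos h

lemma sigmaStep_ge {r : ℕ} (hr : 1 ≤ r) (A B : ZMod r → Fin r → Equiv.Perm (Fin r → Bool))
    (t : Fin (2*r)) (h : ¬ (t : ℕ) < r) :
    sigmaStep hr A B t =
      skewStep (fun c => A (c + ((((t:ℕ) - r : ℕ) : ZMod r)))
        ⟨r - 1 - ((t:ℕ) - r), by omega⟩) (-1) :=
  dif_neg h

lemma prodTake_succ {G : Type*} [Monoid G] {n : ℕ} (f : Fin n → G) (m : ℕ) (hm : m < n) :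
    ((List.ofFn f).take (m+1)).reverse.prod =
      f ⟨m, hm⟩ * ((List.ofFn f).take m).reverse.prod := by
  rw [List.take_succ]
  have hgl : (List.ofFn f)[m]? = some (f ⟨m, hm⟩) := by
    rw [List.getElem?_eq_getElem (by simpa using hm)]
    simp
  rw [hgl]
  simp [List.reverse_append, List.prod_append]

lemma prodDrop {G : Type*} [Monoid G] {n : ℕ} (f : Fin n → G) (m : ℕ) (hm : m < n) :
    ((List.ofFn f).drop m).prod = f ⟨m, hm⟩ * ((List.ofFn f).drop (m+1)).prod := by
  rw [List.drop_eq_getElem_cons (by simpa using hm)]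
  simp

def bitOf (r : ℕ) [NeZero r] (c : ZMod r) : Fin r := ⟨c.val, ZMod.val_lt c⟩

lemma bitOf_cast (r : ℕ) [NeZero r] (c : ZMod r) : (((bitOf r c) : ℕ) : ZMod r) = c :=
  ZMod.natCast_rightInverse c


/-- **Pipelined simultaneous column permutations.** For `r ≥ 1` and any family `τ i` of
permutations of the `r`-bit words (one per column `i`), the global permutation
`(w, i) ↦ (τ i w, i)` of the cyclic butterfly factors as a composition `σ_{2r} ∘ ⋯ ∘ σ_1`
of `2r` permutations of the vertex set, each moving every vertex to itself or a neighbour,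
where for the first `r` steps every moved vertex has its column incremented by `1 (mod r)`
and for the last `r` steps every moved vertex has its column decremented by `1 (mod r)`. -/
theorem cyclicButterfly_pipelined_columns (r : ℕ) (hr : 1 ≤ r)
    (τ : ZMod r → Equiv.Perm (Fin r → Bool)) :
    ∃ σ : Fin (2 * r) → Equiv.Perm ((Fin r → Bool) × ZMod r),
      (∀ t, ∀ v, σ t v = v ∨ (cyclicButterfly r).Adj v (σ t v)) ∧
      (∀ t : Fin (2 * r), (t : ℕ) < r →
        ∀ v, σ t v ≠ v → (σ t v).2 = v.2 + 1) ∧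
      (∀ t : Fin (2 * r), r ≤ (t : ℕ) →
        ∀ v, σ t v ≠ v → (σ t v).2 = v.2 - 1) ∧
      ∀ w : Fin r → Bool, ∀ i : ZMod r,
        (List.ofFn σ).reverse.prod (w, i) = (τ i w, i) := by
  classical
  haveI : NeZero r := ⟨by omega⟩
  have hvac : ∀ i : ZMod r, ∀ (w : Fin r → Bool) (j : Fin r),
      (∀ t : Fin r, bitOf r (i + (((t:ℕ)) : ZMod r)) ≠ j) → τ i w j = w j := by
    intro i w j hj
    exfalso
    apply hj (bitOf r ((((j:ℕ)) : ZMod r) - i))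
    rw [bitOf_cast, add_sub_cancel]
    apply Fin.ext
    exact ZMod.val_cast_of_lt j.isLt
  have hben := fun i : ZMod r =>
    benes r (fun t : Fin r => bitOf r (i + (((t:ℕ)) : ZMod r))) (τ i) (hvac i)
  choose A B hflip hprod using hben
  refine ⟨sigmaStep hr A B, ?_, ?_, ?_, ?_⟩
  · -- adjacency
    rintro t ⟨w, c⟩
    by_cases h : (t : ℕ) < r
    · rw [sigmaStep_lt hr A B t h, skewStep_apply]
      have hfl := (hflip (c - (((t:ℕ)) : ZMod r)) ⟨(t:ℕ), h⟩).2
      have hcc : (c - (((t:ℕ)) : ZMod r)) + ((((⟨(t:ℕ), h⟩ : Fin r) : ℕ)) : ZMod r) = c := by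
        show (c - (((t:ℕ)) : ZMod r)) + (((t:ℕ)) : ZMod r) = c
        ring
      rw [hcc] at hfl
      set v := B (c - (((t:ℕ)) : ZMod r)) ⟨(t:ℕ), h⟩ w with hv
      rcases eq_or_ne ((v, c + 1) : (Fin r → Bool) × ZMod r) (w, c) with he | hne
      · exact Or.inl he
      · refine Or.inr ⟨Ne.symm hne, Or.inl ⟨rfl, ?_⟩⟩
        by_cases hvw : w = v
        · exact Or.inl hvw
        · exact Or.inr (diffAtCol_of_flipOnly (bitOf r c) (bitOf_cast r c)
            (fun j hj => hfl w j hj) (Ne.symm hvw))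
    · rw [sigmaStep_ge hr A B t h, skewStep_apply]
      have ht := t.isLt
      have hfl := (hflip (c + ((((t:ℕ) - r : ℕ)) : ZMod r)) ⟨r - 1 - ((t:ℕ) - r), by omega⟩).1
      have hsum : (c + ((((t:ℕ) - r : ℕ)) : ZMod r)) +
          ((((⟨r - 1 - ((t:ℕ) - r), by omega⟩ : Fin r) : ℕ)) : ZMod r) = c + (-1) := by
        show (c + ((((t:ℕ) - r : ℕ)) : ZMod r)) + (((r - 1 - ((t:ℕ) - r) : ℕ)) : ZMod r) = c + (-1)
        have h1 : ((((t:ℕ) - r : ℕ)) : ZMod r) + (((r - 1 - ((t:ℕ) - r) : ℕ)) : ZMod r)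
            = (((r - 1 : ℕ)) : ZMod r) := by
          rw [← Nat.cast_add]
          congr 1
          omega
        have h2 : (((r - 1 : ℕ)) : ZMod r) = -1 := by
          rw [Nat.cast_sub hr, ZMod.natCast_self, Nat.cast_one, zero_sub]
        rw [add_assoc, h1, h2]
      rw [hsum] at hfl
      set v := A (c + ((((t:ℕ) - r : ℕ)) : ZMod r)) ⟨r - 1 - ((t:ℕ) - r), by omega⟩ w with hv
      rcases eq_or_ne ((v, c + (-1)) : (Fin r → Bool) × ZMod r) (w, c) with he | hne
      · exact Or.inl he
      · refine Or.inr ⟨Ne.symm hne, Or.inr ⟨by ring, ?_⟩⟩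
        by_cases hvw : w = v
        · exact Or.inl hvw
        · refine Or.inr (diffAtCol_of_flipOnly (bitOf r (c + (-1))) (bitOf_cast r (c + (-1)))
            (fun j hj => hfl w j ?_) (Ne.symm hvw))
          exact hj
  · -- forward columns
    rintro t ht ⟨w, c⟩ _
    rw [sigmaStep_lt hr A B t ht, skewStep_apply]
  · -- backward columns
    rintro t ht ⟨w, c⟩ _
    rw [sigmaStep_ge hr A B t (not_lt.mpr ht), skewStep_apply]
    show c + (-1) = c - 1
    ring
  · -- the product
    intro w i
    have step1 : ∀ m, m ≤ r → ∀ w (i : ZMod r),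
        (((List.ofFn (sigmaStep hr A B)).take m).reverse.prod) (w, i) =
          ((((List.ofFn (B i)).take m).reverse.prod) w, i + ((m : ℕ) : ZMod r)) := by
      intro m
      induction m with
      | zero => intro _ w i; simp
      | succ m ih =>
        intro hm w i
        have hm2 : m < 2*r := by omega
        rw [prodTake_succ (sigmaStep hr A B) m hm2, prodTake_succ (B i) m (by omega),
          Equiv.Perm.mul_apply, Equiv.Perm.mul_apply, ih (by omega)]
        rw [sigmaStep_lt hr A B ⟨m, hm2⟩ (by simpa using (by omega : m < r)), skewStep_apply]
        rw [add_sub_cancel_right]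
        congr 1
        push_cast
        ring
    have step2 : ∀ s, s ≤ r → ∀ w (i : ZMod r),
        (((List.ofFn (sigmaStep hr A B)).take (r + s)).reverse.prod) (w, i) =
          ((((List.ofFn (A i)).drop (r - s)).prod) (((List.ofFn (B i)).reverse.prod) w),
            i - ((s : ℕ) : ZMod r)) := by
      intro s
      induction s with
      | zero =>
        intro _ w i
        rw [Nat.add_zero, step1 r le_rfl w i]
        rw [List.take_of_length_le (by simp), Nat.sub_zero,
          List.drop_eq_nil_of_le (by simp)]
        simp [ZMod.natCast_self]
      | succ s ih =>
        intro hs w i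
        have h2 : r + s < 2*r := by omega
        have hrs : r + (s+1) = (r+s)+1 := rfl
        rw [hrs, prodTake_succ (sigmaStep hr A B) (r+s) h2, Equiv.Perm.mul_apply,
          ih (by omega)]
        rw [sigmaStep_ge hr A B ⟨r+s, h2⟩ (by simp), skewStep_apply]
        have he : r + s - r = s := by omega
        simp only [show ((⟨r+s, h2⟩ : Fin (2*r)) : ℕ) - r = s from he]
        rw [sub_add_cancel]
        rw [show r - (s+1) = r - 1 - s by omega]
        rw [prodDrop (A i) (r - 1 - s) (by omega), show (r - 1 - s) + 1 = r - s by omega,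
          Equiv.Perm.mul_apply]
        congr 1
        push_cast
        ring
    have hfull : (List.ofFn (sigmaStep hr A B)).reverse.prod =
        ((List.ofFn (sigmaStep hr A B)).take (r + r)).reverse.prod := by
      rw [List.take_of_length_le (by simp [two_mul])]
    rw [hfull, step2 r le_rfl w i]
    rw [Nat.sub_self, List.drop_zero]
    rw [hprod i]
    simp [Equiv.Perm.mul_apply, ZMod.natCast_self]
end
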